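/- arXiv:0807.4229 — 5 statements merged into one kernel-verified Lean document; each statement's English description precedes it below -/
import Mathlib

section
/- Let X = ∏_{i=1}^n X_i be a product of n finite intervals of integers, each of cardinality at least 2, and let F = (f_1,…,f_n) be a map from X to itself. If I ⊆ {1,…,n} is such that every positive circuit of every local interaction graph 𝐆_F(x,v) (for (x,v) ∈ X') has at least one vertex in I, then the number of fixed points of F is at most ∏_{i∈I} |X_i|. -/
/-! Common definitions for discrete dynamical systems on products of
integer intervals, following Richard, "Positive circuits and maximal
number of fixed points in discrete dynamical systems". -/

/-- The state space `X = ∏ i, [a i, b i]` as a subset of `Fin n → ℤ`. -/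
def StateSpace {n : ℕ} (a b : Fin n → ℤ) : Set (Fin n → ℤ) :=
  {x | ∀ i, a i ≤ x i ∧ x i ≤ b i}

/-- `v` is a directional vector, i.e. `v ∈ {-1,1}^n`. -/
def IsDir {n : ℕ} (v : Fin n → ℤ) : Prop := ∀ i, v i = 1 ∨ v i = -1

/-- `(x, v) ∈ X'`: `x ∈ X`, `v ∈ {-1,1}^n` and `x + v ∈ X`. -/
def InX' {n : ℕ} (a b : Fin n → ℤ) (x v : Fin n → ℤ) : Prop :=
  x ∈ StateSpace a b ∧ IsDir v ∧ (x + v) ∈ StateSpace a b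

/-- Discrete Jacobian entry `f_ij(x,v) = (f_i(x + v_j e_j) - f_i(x)) / v_j`. -/
def jac {n : ℕ} (F : (Fin n → ℤ) → Fin n → ℤ) (x v : Fin n → ℤ) (i j : Fin n) : ℤ :=
  (F (Function.update x j (x j + v j)) i - F x i) / v j

/-- A signed edge `(j, s, i)`: initial vertex `j`, sign `s`, final vertex `i`. -/
abbrev SEdge (n : ℕ) := Fin n × ℤ × Fin n

/-- Edge set of the local interaction graph `𝐆_F(x,v)`: a positive
(resp. negative) edge from `j` to `i` iff `f_ij(x,v) > 0` (resp. `< 0`). -/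
def localGraph {n : ℕ} (F : (Fin n → ℤ) → Fin n → ℤ) (x v : Fin n → ℤ) :
    Set (SEdge n) :=
  {e | (e.2.1 = 1 ∧ 0 < jac F x v e.2.2 e.1) ∨ (e.2.1 = -1 ∧ jac F x v e.2.2 e.1 < 0)}

/-- `p` and `q` are on both sides of `t`. -/
def BothSides (p q t : ℚ) : Prop := (p < t ∧ t < q) ∨ (q < t ∧ t < p)

/-- Edge set of the local interaction graph with thresholds `G_F(x,v)`:
an edge `(j,s,i)` of `𝐆_F(x,v)` such that moreover `f_i(x)` and
`f_i(x + v_j e_j)` are on both sides of the threshold `x_i + v_i / 2`. -/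
def localGraphT {n : ℕ} (F : (Fin n → ℤ) → Fin n → ℤ) (x v : Fin n → ℤ) :
    Set (SEdge n) :=
  {e | e ∈ localGraph F x v ∧
    BothSides (F x e.2.2) (F (Function.update x e.1 (x e.1 + v e.1)) e.2.2)
      ((x e.2.2 : ℚ) + (v e.2.2 : ℚ) / 2)}

/-- `c` is an (elementary) circuit of the signed graph with edge set `E`:
a nonempty sequence of consecutive edges, closing up, whose initial
vertices are mutually distinct. -/
def IsCircuit {n : ℕ} (E : Set (SEdge n)) (c : List (SEdge n)) : Prop :=
  c ≠ [] ∧ (∀ e ∈ c, e ∈ E) ∧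
  (∀ (k : ℕ) (h : k + 1 < c.length),
    (c.get ⟨k, Nat.lt_of_succ_lt h⟩).2.2 = (c.get ⟨k + 1, h⟩).1) ∧
  (c.getLast?).map (fun e => e.2.2) = (c.head?).map (fun e => e.1) ∧
  (c.map (fun e => e.1)).Nodup

/-- A positive circuit: a circuit whose product of signs is positive. -/
def IsPosCircuit {n : ℕ} (E : Set (SEdge n)) (c : List (SEdge n)) : Prop :=
  IsCircuit E c ∧ 0 < (c.map (fun e => e.2.1)).prod

/-- The graph `E` has a positive circuit. -/
def HasPosCircuit {n : ℕ} (E : Set (SEdge n)) : Prop := ∃ c, IsPosCircuit E c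

/-- Vertex `i` belongs to some positive circuit of `E`. -/
def MemPosCircuit {n : ℕ} (E : Set (SEdge n)) (i : Fin n) : Prop :=
  ∃ c, IsPosCircuit E c ∧ i ∈ c.map (fun e => e.1)

/-- `I` is a positive feedback vertex set of `E`: every positive circuit
of `E` has at least one vertex in `I`. -/
def IsPFVS {n : ℕ} (E : Set (SEdge n)) (I : Finset (Fin n)) : Prop :=
  ∀ c, IsPosCircuit E c → ∃ i ∈ I, i ∈ c.map (fun e => e.1)

/-- `T_i(G_F)`: the set of real numbers `t` such that `t = x_i + v_i/2` for
some `(x,v) ∈ X'` such that `i` belongs to a positive circuit of `G_F(x,v)`. -/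
def Tset {n : ℕ} (a b : Fin n → ℤ) (F : (Fin n → ℤ) → Fin n → ℤ) (i : Fin n) : Set ℝ :=
  {t | ∃ x v, InX' a b x v ∧ t = (x i : ℝ) + (v i : ℝ) / 2 ∧
    MemPosCircuit (localGraphT F x v) i}

/-- Edge set of the global interaction graph `𝐆(F)` (without thresholds). -/
def globalGraph {n : ℕ} (a b : Fin n → ℤ) (F : (Fin n → ℤ) → Fin n → ℤ) :
    Set (SEdge n) :=
  ⋃ (x : Fin n → ℤ) (v : Fin n → ℤ) (_ : InX' a b x v), localGraph F x v

/-- Edge set of the global interaction graph `G(F)` (with thresholds). -/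
def globalGraphT {n : ℕ} (a b : Fin n → ℤ) (F : (Fin n → ℤ) → Fin n → ℤ) :
    Set (SEdge n) :=
  ⋃ (x : Fin n → ℤ) (v : Fin n → ℤ) (_ : InX' a b x v), localGraphT F x v

/-- Edge relation of the asynchronous state transition graph `Γ(F)`. -/
def Async {n : ℕ} (F : (Fin n → ℤ) → Fin n → ℤ) (x y : Fin n → ℤ) : Prop :=
  ∃ i, F x i ≠ x i ∧ y = Function.update x i (x i + (F x i - x i).sign)

/-- A trap domain of `Γ(F)`: a nonempty subset of `X` closed under the
edges of `Γ(F)`. -/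
def IsTrapDomain {n : ℕ} (a b : Fin n → ℤ) (F : (Fin n → ℤ) → Fin n → ℤ)
    (A : Set (Fin n → ℤ)) : Prop :=
  A.Nonempty ∧ A ⊆ StateSpace a b ∧ ∀ x ∈ A, ∀ y, Async F x y → y ∈ A

/-- An attractor of `Γ(F)`: a trap domain minimal for inclusion. -/
def IsAttractor {n : ℕ} (a b : Fin n → ℤ) (F : (Fin n → ℤ) → Fin n → ℤ)
    (A : Set (Fin n → ℤ)) : Prop :=
  IsTrapDomain a b F A ∧ ∀ B, IsTrapDomain a b F B → B ⊆ A → B = A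

section Helpers
variable {n : ℕ}

private def sg (p q : Fin n → ℤ) (k : Fin n) : ℤ := if p k < q k then 1 else -1

private def dv (b p q : Fin n → ℤ) (k : Fin n) : ℤ :=
  if p k = q k then (if p k < b k then 1 else -1) else sg p q k

private def clB (p q t : Fin n → ℤ) (j : Fin n) : ℤ :=
  max (min (p j) (q j)) (min (t j) (max (p j) (q j)))

private lemma sg_cases (p q : Fin n → ℤ) (k : Fin n) : sg p q k = 1 ∨ sg p q k = -1 := by
  unfold sg; split <;> simp

private lemma dv_cases (b p q : Fin n → ℤ) (k : Fin n) : dv b p q k = 1 ∨ dv b p q k = -1 := by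
  unfold dv sg; split_ifs <;> simp

private lemma dv_active (b p q : Fin n → ℤ) (k : Fin n) (h : p k ≠ q k) :
    dv b p q k = sg p q k := if_neg h

private lemma clB_mem (p q t : Fin n → ℤ) (j : Fin n) :
    min (p j) (q j) ≤ clB p q t j ∧ clB p q t j ≤ max (p j) (q j) := by
  unfold clB; omega

private lemma clB_lt_lift {p q t t' : Fin n → ℤ} {j : Fin n}
    (h : clB p q t j < clB p q t' j) : t j < t' j := by
  unfold clB at h; omega

private lemma clB_congr {p q t t' : Fin n → ℤ} {j : Fin n} (h : t j = t' j) :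
    clB p q t j = clB p q t' j := by unfold clB; rw [h]

private lemma clB_comp (p q p' q' t : Fin n → ℤ) (j : Fin n)
    (h1 : min (p j) (q j) ≤ min (p' j) (q' j)) (h2 : max (p' j) (q' j) ≤ max (p j) (q j)) :
    clB p' q' (fun i => clB p q t i) j = clB p' q' t j := by
  simp only [clB]; omega

private lemma exists_cycle {α : Type*} [Finite α] [Nonempty α] (f : α → α) :
    ∃ (x : α) (m : ℕ), 0 < m ∧ f^[m] x = x ∧
      ∀ i j, i < j → j < m → f^[i] x ≠ f^[j] x := by
  classical
  obtain ⟨x₀⟩ := (inferInstance : Nonempty α)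
  have main : ∀ t1 t2 : ℕ, t1 < t2 → f^[t1] x₀ = f^[t2] x₀ →
      ∃ (x : α) (m : ℕ), 0 < m ∧ f^[m] x = x ∧
        ∀ i j, i < j → j < m → f^[i] x ≠ f^[j] x := by
    intro t1 t2 h12 heq
    have hper : f^[t2 - t1] (f^[t1] x₀) = f^[t1] x₀ := by
      rw [← Function.iterate_add_apply]
      have h : t2 - t1 + t1 = t2 := by omega
      rw [h]; exact heq.symm
    set x := f^[t1] x₀ with hx
    have hex : ∃ m, 0 < m ∧ f^[m] x = x := ⟨t2 - t1, by omega, hper⟩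
    refine ⟨x, Nat.find hex, (Nat.find_spec hex).1, (Nat.find_spec hex).2, ?_⟩
    intro i j hij hjm heqij
    set m := Nat.find hex with hmdef
    have h1 : f^[m - j] (f^[j] x) = x := by
      rw [← Function.iterate_add_apply]
      have h : m - j + j = m := by omega
      rw [h]; exact (Nat.find_spec hex).2
    rw [← heqij] at h1
    have h2 : f^[m - j + i] x = x := by
      rw [Function.iterate_add_apply]; exact h1
    exact Nat.find_min hex (by omega : m - j + i < m) ⟨by omega, h2⟩
  obtain ⟨t1, t2, hne, heq⟩ := Finite.exists_ne_map_eq_of_infinite (fun t : ℕ => f^[t] x₀)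
  rcases Nat.lt_or_ge t1 t2 with hlt | hge
  · exact main t1 t2 hlt heq
  · exact main t2 t1 (by omega) heq.symm

private lemma posCircuit_of_cycle (E : Set (SEdge n)) (s : Fin n → ℤ)
    (hs : ∀ j, s j = 1 ∨ s j = -1) (κ : ℕ → Fin n) (m : ℕ) (hm : 0 < m)
    (hper : κ m = κ 0)
    (hmem : ∀ t, ((κ t, s (κ (t+1)) * s (κ t), κ (t+1)) : SEdge n) ∈ E)
    (hinj : ∀ i j, i < j → j < m → κ i ≠ κ j) :
    IsPosCircuit E ((List.range m).map fun t => ((κ t, s (κ (t+1)) * s (κ t), κ (t+1)) : SEdge n)) := by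
  set g : ℕ → SEdge n := fun t => ((κ t, s (κ (t+1)) * s (κ t), κ (t+1)) : SEdge n) with hg
  have hlen : ((List.range m).map g).length = m := by simp
  have hs2 : ∀ j, s j * s j = 1 := by
    intro j; rcases hs j with h | h <;> rw [h] <;> norm_num
  constructor
  · refine ⟨?_, ?_, ?_, ?_, ?_⟩
    · intro hnil
      have h := congrArg List.length hnil
      rw [hlen] at h
      simp at h; omega
    · intro e he
      obtain ⟨t, _, rfl⟩ := List.mem_map.mp he
      exact hmem t
    · intro k h
      rw [List.get_eq_getElem, List.get_eq_getElem]
      simp only [List.getElem_map, List.getElem_range]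
      rfl
    · rw [List.getLast?_eq_getElem?, List.head?_eq_getElem?, hlen]
      rw [List.getElem?_map, List.getElem?_map, List.getElem?_range (by omega : m - 1 < m),
        List.getElem?_range hm]
      simp only [Option.map_some]
      have h : m - 1 + 1 = m := by omega
      simp only [hg, h, hper]
    · have h : ((List.range m).map g).map (fun e => e.1) = (List.range m).map κ := by
        rw [List.map_map]; rfl
      rw [h]
      refine List.Nodup.map_on ?_ List.nodup_range
      intro t1 h1 t2 h2 heq
      rw [List.mem_range] at h1 h2
      by_contra hne
      rcases Nat.lt_or_ge t1 t2 with hlt | hge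
      · exact hinj t1 t2 hlt h2 heq
      · exact hinj t2 t1 (by omega) h1 heq.symm
  · have hmaps : ((List.range m).map g).map (fun e => e.2.1)
        = (List.range m).map (fun t => s (κ (t+1)) * s (κ t)) := by rw [List.map_map]; rfl
    rw [hmaps]
    have tele : ∀ M : ℕ, ((List.range M).map (fun t => s (κ (t+1)) * s (κ t))).prod
        = s (κ M) * s (κ 0) := by
      intro M; induction M with
      | zero => simpa using (hs2 (κ 0)).symm
      | succ M ihM =>
          rw [List.range_succ, List.map_append, List.prod_append, ihM]
          simp only [List.map_cons, List.map_nil, List.prod_cons, List.prod_nil, mul_one]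
          have h1 := hs2 (κ M)
          linear_combination (s (κ (M + 1)) * s (κ 0)) * h1
    rw [tele m, hper, hs2 (κ 0)]
    norm_num

end Helpers

section EdgeSec
variable {n : ℕ}

private lemma edge_mem (b : Fin n → ℤ) (F : (Fin n → ℤ) → Fin n → ℤ) (p q : Fin n → ℤ)
    (hp : ∀ j, clB p q (F p) j = p j) (k i : Fin n) (hk : p k ≠ q k)
    (hD : 0 < sg p q i *
      (clB p q (F (Function.update p k (p k + dv b p q k))) i - p i)) :
    ((k, sg p q i * sg p q k, i) : SEdge n) ∈ localGraph F p (dv b p q) := by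
  have hjac : jac F p (dv b p q) i k
      = (F (Function.update p k (p k + dv b p q k)) i - F p i) / dv b p q k := rfl
  simp only [localGraph, Set.mem_setOf_eq]
  rcases sg_cases p q i with hsi | hsi
  · rw [hsi, one_mul] at hD
    have h1 : clB p q (F p) i < clB p q
        (F (Function.update p k (p k + dv b p q k))) i := by
      rw [hp i]; omega
    have hΔ : F p i < F (Function.update p k (p k + dv b p q k)) i := clB_lt_lift h1
    rcases sg_cases p q k with hsk | hsk
    · have hvk : dv b p q k = 1 := by rw [dv_active b p q k hk, hsk]
      refine Or.inl ⟨by simp only [hsi, hsk]; norm_num, ?_⟩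
      rw [hjac, hvk]
      rw [hvk] at hΔ
      omega
    · have hvk : dv b p q k = -1 := by rw [dv_active b p q k hk, hsk]
      refine Or.inr ⟨by simp only [hsi, hsk]; norm_num, ?_⟩
      rw [hjac, hvk]
      rw [hvk] at hΔ
      omega
  · rw [hsi] at hD
    have h1 : clB p q (F (Function.update p k (p k + dv b p q k))) i
        < clB p q (F p) i := by
      rw [hp i]; omega
    have hΔ : F (Function.update p k (p k + dv b p q k)) i < F p i := clB_lt_lift h1
    rcases sg_cases p q k with hsk | hsk
    · have hvk : dv b p q k = 1 := by rw [dv_active b p q k hk, hsk]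
      refine Or.inr ⟨by simp only [hsi, hsk]; norm_num, ?_⟩
      rw [hjac, hvk]
      rw [hvk] at hΔ
      omega
    · have hvk : dv b p q k = -1 := by rw [dv_active b p q k hk, hsk]
      refine Or.inl ⟨by simp only [hsi, hsk]; norm_num, ?_⟩
      rw [hjac, hvk]
      rw [hvk] at hΔ
      omega

end EdgeSec

section CoreSec
variable {n : ℕ}

private lemma core (a b : Fin n → ℤ) (hab : ∀ i, a i + 1 ≤ b i)
    (F : (Fin n → ℤ) → Fin n → ℤ) :
    ∀ (N : ℕ) (p q : Fin n → ℤ),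
      (∑ j, (q j - p j).natAbs) ≤ N →
      p ∈ StateSpace a b → q ∈ StateSpace a b → p ≠ q →
      (∀ j, clB p q (F p) j = p j) →
      (∀ j, clB p q (F q) j = q j) →
      ∃ z v c, InX' a b z v ∧ IsPosCircuit (localGraph F z v) c ∧
        ∀ e ∈ c, p e.1 ≠ q e.1 := by
  intro N
  induction N with
  | zero =>
      intro p q hm hpS hqS hne hp hq
      exfalso
      apply hne
      funext j
      have hj : (q j - p j).natAbs ≤ ∑ i, (q i - p i).natAbs :=
        Finset.single_le_sum (f := fun i => (q i - p i).natAbs)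
          (fun i _ => Nat.zero_le _) (Finset.mem_univ j)
      omega
  | succ N ih =>
      intro p q hm hpS hqS hne hp hq
      classical
      -- the direction vector is admissible
      have hdvS : (p + dv b p q) ∈ StateSpace a b := by
        intro i
        have h1 := hpS i; have h2 := hqS i; have h3 := hab i
        simp only [Pi.add_apply]
        unfold dv sg
        split_ifs <;> omega
      have hInX' : InX' a b p (dv b p q) := ⟨hpS, dv_cases b p q, hdvS⟩
      by_cases hall : ∀ k, p k ≠ q k → ∃ i, p i ≠ q i ∧
          0 < sg p q i * (clB p q (F (Function.update p k (p k + dv b p q k))) i - p i)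
      · -- Case 1 : every active vertex has an "increasing" out-edge: build a positive circuit
        obtain ⟨k0, hk0⟩ := Function.ne_iff.mp hne
        haveI : Nonempty {k : Fin n // p k ≠ q k} := ⟨⟨k0, hk0⟩⟩
        obtain ⟨f, hfR⟩ : ∃ f : {k : Fin n // p k ≠ q k} → {k : Fin n // p k ≠ q k},
            ∀ k : {k : Fin n // p k ≠ q k},
              0 < sg p q ((f k : Fin n)) * (clB p q
                (F (Function.update p (k : Fin n) (p (k : Fin n) + dv b p q (k : Fin n))))
                ((f k : Fin n)) - p ((f k : Fin n))) :=
          ⟨fun k => ⟨(hall k.1 k.2).choose, (hall k.1 k.2).choose_spec.1⟩,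
            fun k => (hall k.1 k.2).choose_spec.2⟩
        obtain ⟨x₀, m, hm0, hmx, hdist⟩ := exists_cycle f
        have hκa : ∀ t : ℕ, p ((f^[t] x₀ : {k : Fin n // p k ≠ q k}) : Fin n)
            ≠ q ((f^[t] x₀ : {k : Fin n // p k ≠ q k}) : Fin n) := fun t => (f^[t] x₀).2
        have hκm : ((f^[m] x₀ : {k : Fin n // p k ≠ q k}) : Fin n)
            = ((f^[0] x₀ : {k : Fin n // p k ≠ q k}) : Fin n) := by rw [hmx]; rfl
        have hκD : ∀ t : ℕ, 0 < sg p q ((f^[t+1] x₀ : {k : Fin n // p k ≠ q k}) : Fin n) *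
            (clB p q (F (Function.update p ((f^[t] x₀ : {k : Fin n // p k ≠ q k}) : Fin n)
              (p ((f^[t] x₀ : {k : Fin n // p k ≠ q k}) : Fin n)
                + dv b p q ((f^[t] x₀ : {k : Fin n // p k ≠ q k}) : Fin n))))
              ((f^[t+1] x₀ : {k : Fin n // p k ≠ q k}) : Fin n)
              - p ((f^[t+1] x₀ : {k : Fin n // p k ≠ q k}) : Fin n)) := by
          intro t
          rw [Function.iterate_succ_apply']
          exact hfR (f^[t] x₀)
        have hmem : ∀ t : ℕ, ((((f^[t] x₀ : {k : Fin n // p k ≠ q k}) : Fin n),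
              sg p q ((f^[t+1] x₀ : {k : Fin n // p k ≠ q k}) : Fin n) *
                sg p q ((f^[t] x₀ : {k : Fin n // p k ≠ q k}) : Fin n),
              ((f^[t+1] x₀ : {k : Fin n // p k ≠ q k}) : Fin n)) : SEdge n)
              ∈ localGraph F p (dv b p q) := by
          intro t
          exact edge_mem b F p q hp _ _ (hκa t) (hκD t)
        have hinj : ∀ i j : ℕ, i < j → j < m →
            ((f^[i] x₀ : {k : Fin n // p k ≠ q k}) : Fin n)
            ≠ ((f^[j] x₀ : {k : Fin n // p k ≠ q k}) : Fin n) := by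
          intro i j hij hjm heq
          exact hdist i j hij hjm (Subtype.ext heq)
        refine ⟨p, dv b p q, _, hInX',
          posCircuit_of_cycle _ (sg p q) (sg_cases p q)
            (fun t => ((f^[t] x₀ : {k : Fin n // p k ≠ q k}) : Fin n)) m hm0 hκm hmem hinj, ?_⟩
        intro e he
        obtain ⟨t, _, rfl⟩ := List.mem_map.mp he
        exact hκa t
      · -- Case 2 : some active vertex c₀ has only a "zero column": shrink the box
        push_neg at hall
        obtain ⟨c₀, hc₀a, hc₀⟩ := hall
        set p' := Function.update p c₀ (p c₀ + dv b p q c₀) with hp'def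
        have hvc : dv b p q c₀ = sg p q c₀ := dv_active b p q c₀ hc₀a
        have hHp' : ∀ j, clB p q (F p') j = p j := by
          intro j
          have h1 := clB_mem p q (F p') j
          by_cases hj : p j = q j
          · omega
          · have h2 := hc₀ j hj
            unfold sg at h2
            by_cases hlt : p j < q j
            · rw [if_pos hlt] at h2; omega
            · rw [if_neg hlt] at h2; omega
        have hp'q : p' ≠ q := by
          intro heq
          apply hne
          funext j
          have h := hHp' j
          rw [heq] at h
          rw [hq j] at h
          exact h.symm
        have hp'S : p' ∈ StateSpace a b := by
          intro i
          by_cases hi : i = c₀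
          · subst hi
            have h1 := hpS i; have h2 := hqS i
            rw [hp'def]
            simp only [Function.update_self]
            rw [hvc]; unfold sg; split_ifs <;> constructor <;> omega
          · rw [hp'def, Function.update_of_ne hi]; exact hpS i
        have hmeas : (∑ j, (q j - p' j).natAbs) ≤ N := by
          have hsplit1 : (∑ j, (q j - p' j).natAbs)
              = ∑ j ∈ Finset.univ \ {c₀}, (q j - p' j).natAbs + (q c₀ - p' c₀).natAbs :=
            Finset.sum_eq_sum_sdiff_singleton_add (Finset.mem_univ c₀) _
          have hsplit2 : (∑ j, (q j - p j).natAbs)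
              = ∑ j ∈ Finset.univ \ {c₀}, (q j - p j).natAbs + (q c₀ - p c₀).natAbs :=
            Finset.sum_eq_sum_sdiff_singleton_add (Finset.mem_univ c₀) _
          have hagree : ∑ j ∈ Finset.univ \ {c₀}, (q j - p' j).natAbs
              = ∑ j ∈ Finset.univ \ {c₀}, (q j - p j).natAbs := by
            apply Finset.sum_congr rfl
            intro j hj
            rw [Finset.mem_sdiff, Finset.mem_singleton] at hj
            rw [hp'def, Function.update_of_ne hj.2]
          have hc : (q c₀ - p' c₀).natAbs + 1 = (q c₀ - p c₀).natAbs := by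
            rw [hp'def]
            simp only [Function.update_self]
            rw [hvc]; unfold sg; split_ifs with h <;> omega
          omega
        have hlohi : ∀ j, min (p j) (q j) ≤ min (p' j) (q j)
            ∧ max (p' j) (q j) ≤ max (p j) (q j) := by
          intro j
          by_cases hj : j = c₀
          · subst hj
            rw [hp'def]
            simp only [Function.update_self]
            rw [hvc]; unfold sg; split_ifs with h <;> omega
          · rw [hp'def, Function.update_of_ne hj]; omega
        have hnew1 : ∀ j, clB p' q (F p') j = p' j := by
          intro j
          have e1 := clB_comp p q p' q (F p') j (hlohi j).1 (hlohi j).2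
          rw [← e1, clB_congr (hHp' j)]
          by_cases hj : j = c₀
          · subst hj
            unfold clB
            rw [hp'def]
            simp only [Function.update_self]
            rw [hvc]; unfold sg; split_ifs with h <;> omega
          · unfold clB
            rw [hp'def, Function.update_of_ne hj]
            omega
        have hnew2 : ∀ j, clB p' q (F q) j = q j := by
          intro j
          have e1 := clB_comp p q p' q (F q) j (hlohi j).1 (hlohi j).2
          rw [← e1, clB_congr (hq j)]
          unfold clB
          by_cases hj : j = c₀
          · subst hj
            rw [hp'def]
            simp only [Function.update_self]
            omega
          · rw [hp'def, Function.update_of_ne hj]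
            omega
        obtain ⟨z, v, c, h1, h2, h3⟩ := ih p' q hmeas hp'S hqS hp'q hnew1 hnew2
        refine ⟨z, v, c, h1, h2, ?_⟩
        intro e he
        have h4 := h3 e he
        by_cases hj : e.1 = c₀
        · rw [hj]; exact hc₀a
        · rw [hp'def, Function.update_of_ne hj] at h4; exact h4

end CoreSec


/-- If every positive circuit of every local interaction graph `𝐆_F(x,v)`
has a vertex in `I`, then `F` has at most `∏_{i ∈ I} |X_i|` fixed points. -/
theorem stmt0 {n : ℕ} (a b : Fin n → ℤ) (hab : ∀ i, a i + 1 ≤ b i)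
    (F : (Fin n → ℤ) → Fin n → ℤ)
    (hF : ∀ x ∈ StateSpace a b, F x ∈ StateSpace a b)
    (I : Finset (Fin n))
    (hI : ∀ x v, InX' a b x v → IsPFVS (localGraph F x v) I) :
    {x ∈ StateSpace a b | F x = x}.ncard ≤ ∏ i ∈ I, (b i - a i + 1).toNat := by
  classical
  have key : ∀ x y : Fin n → ℤ, x ∈ StateSpace a b → y ∈ StateSpace a b →
      F x = x → F y = y → (∀ i ∈ I, x i = y i) → x = y := by
    intro x y hx hy hfx hfy hagr
    by_contra hne
    have hclx : ∀ j, clB x y (F x) j = x j := by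
      intro j; rw [hfx]; unfold clB; omega
    have hcly : ∀ j, clB x y (F y) j = y j := by
      intro j; rw [hfy]; unfold clB; omega
    obtain ⟨z, v, c, hzv, hpc, hsrc⟩ :=
      core a b hab F (∑ j, (y j - x j).natAbs) x y le_rfl hx hy hne hclx hcly
    obtain ⟨i, hiI, him⟩ := hI z v hzv c hpc
    obtain ⟨e, hec, he1⟩ := List.mem_map.mp him
    exact hsrc e hec (by rw [he1]; exact hagr i hiI)
  have hle : {x ∈ StateSpace a b | F x = x}.ncard ≤
      (Fintype.piFinset (fun i => if i ∈ I then Finset.Icc (a i) (b i)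
        else ({0} : Finset ℤ))).card := by
    rw [← Set.ncard_coe_finset]
    apply Set.ncard_le_ncard_of_injOn (fun x i => if i ∈ I then x i else 0)
    · intro x hx
      rw [Finset.mem_coe, Fintype.mem_piFinset]
      intro i
      by_cases hiI : i ∈ I
      · simp only [hiI, if_pos]
        exact Finset.mem_Icc.mpr ⟨(hx.1 i).1, (hx.1 i).2⟩
      · simp only [hiI, if_neg, Finset.mem_singleton, if_false]
    · intro x hx y hy hxy
      apply key x y hx.1 hy.1 hx.2 hy.2
      intro i hiI
      have h := congrFun hxy i
      simpa [hiI] using h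
  rw [Fintype.card_piFinset] at hle
  have hcard : ∀ i : Fin n, (if i ∈ I then Finset.Icc (a i) (b i)
      else ({0} : Finset ℤ)).card = if i ∈ I then (b i - a i + 1).toNat else 1 := by
    intro i
    split_ifs with h
    · rw [Int.card_Icc]
      congr 1
      ring
    · simp
  have heq : (∏ i, (if i ∈ I then Finset.Icc (a i) (b i) else ({0} : Finset ℤ)).card)
      = ∏ i ∈ I, (b i - a i + 1).toNat :=
    calc (∏ i, (if i ∈ I then Finset.Icc (a i) (b i) else ({0} : Finset ℤ)).card)
        = ∏ i, (if i ∈ I then (b i - a i + 1).toNat else 1) :=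
          Finset.prod_congr rfl (fun i _ => hcard i)
      _ = ∏ i ∈ Finset.univ ∩ I, (b i - a i + 1).toNat := Finset.prod_ite_mem _ _ _
      _ = ∏ i ∈ I, (b i - a i + 1).toNat := by rw [Finset.univ_inter]
  rw [heq] at hle
  exact hle
end

section
/- Let X = ∏_{i=1}^n X_i be a product of n finite intervals of integers, each of cardinality at least 2, and let F be a map from X to itself. If for every (x,v) ∈ X' the local interaction graph 𝐆_F(x,v) has no positive circuit, then F has at most one fixed point. -/
section RCHelpers
variable {n : ℕ}

def clampV {n : ℕ} (c d x : Fin n → ℤ) : Fin n → ℤ := fun i => max (c i) (min (d i) (x i))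

lemma clampV_eq_of_mem (c d x : Fin n → ℤ) (hx : ∀ i, c i ≤ x i ∧ x i ≤ d i) :
    clampV c d x = x := by
  funext i; have := hx i; simp only [clampV]; omega

lemma clampV_mem (c d x : Fin n → ℤ) (hcd : ∀ i, c i ≤ d i) (i : Fin n) :
    c i ≤ clampV c d x i ∧ clampV c d x i ≤ d i := by
  have := hcd i; simp only [clampV]; omega

lemma clampV_clampV (c d c' d' x : Fin n → ℤ)
    (hsub : ∀ i, c i ≤ c' i ∧ c' i ≤ d' i ∧ d' i ≤ d i) :
    clampV c' d' (clampV c d x) = clampV c' d' x := by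
  funext i; have := hsub i; simp only [clampV]; omega

lemma div_pm (N w : ℤ) (hw : w = 1 ∨ w = -1) : N / w = N * w := by
  rcases hw with h | h <;> subst h <;> simp [Int.ediv_neg]

lemma jac_clamp (c d : Fin n → ℤ) (F : (Fin n → ℤ) → Fin n → ℤ) (x v : Fin n → ℤ)
    (i j : Fin n) (hw : v j = 1 ∨ v j = -1) :
    (0 < jac (fun y => clampV c d (F y)) x v i j → 0 < jac F x v i j) ∧
    (jac (fun y => clampV c d (F y)) x v i j < 0 → jac F x v i j < 0) := by
  unfold jac
  rw [div_pm _ _ hw, div_pm _ _ hw]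
  rcases hw with h | h <;> rw [h] <;> simp only [clampV] <;> constructor <;> intro h1 <;> omega

lemma pos_circuit_of_cycle (E : Set (SEdge n)) (v : Fin n → ℤ)
    (hv : ∀ i, v i = 1 ∨ v i = -1)
    (it : ℕ → Fin n) (r : ℕ) (hr : 0 < r)
    (hmem : ∀ m, (it m, v (it m) * v (it (m + 1)), it (m + 1)) ∈ E)
    (hperiod : it r = it 0)
    (hinj : ∀ k k' : ℕ, k < r → k' < r → it k = it k' → k = k') :
    HasPosCircuit E := by
  obtain ⟨r', rfl⟩ : ∃ r', r = r' + 1 := ⟨r - 1, by omega⟩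
  refine ⟨List.ofFn (fun k : Fin (r' + 1) =>
    ((it k, v (it k) * v (it (k + 1)), it (k + 1)) : SEdge n)), ⟨⟨?_, ?_, ?_, ?_, ?_⟩, ?_⟩⟩
  · simp [List.ofFn_succ]
  · intro e he
    rw [List.mem_ofFn] at he
    obtain ⟨k, rfl⟩ := he
    exact hmem k
  · intro k hk1
    rw [List.get_ofFn, List.get_ofFn]
    rfl
  · rw [List.getLast?_eq_getElem?, List.head?_eq_getElem?]
    simp only [List.getElem?_ofFn, List.length_ofFn, List.ofFnNthVal]
    rw [dif_pos (by omega : r' + 1 - 1 < r' + 1), dif_pos (by omega : 0 < r' + 1)]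
    simp only [Option.map_some]
    have he : r' + 1 - 1 = r' := by omega
    simp only [he]
    exact congrArg some hperiod
  · rw [List.map_ofFn, List.nodup_ofFn]
    intro k k' hkk'
    exact Fin.ext (hinj k k' k.isLt k'.isLt hkk')
  · rw [List.map_ofFn, List.prod_ofFn]
    simp only [Function.comp]
    rw [Finset.prod_mul_distrib]
    have hre : ∏ k : Fin (r' + 1), v (it ((k : ℕ) + 1)) = ∏ k : Fin (r' + 1), v (it (k : ℕ)) := by
      rw [← Equiv.prod_comp (finRotate (r' + 1)) (fun k : Fin (r' + 1) => v (it (k : ℕ)))]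
      apply Finset.prod_congr rfl
      intro k _
      congr 1
      rw [finRotate_succ_apply]
      rcases Nat.lt_or_ge ((k : ℕ) + 1) (r' + 1) with hlt | hge
      · rw [Fin.val_add_one_of_lt (by omega : (k : ℕ) < r')]
      · have hk : (k : ℕ) = r' := by omega
        have h0 : (k + 1 : Fin (r' + 1)) = 0 := by
          apply Fin.ext
          rw [Fin.val_add_one]
          split
          · rfl
          · exfalso; rename_i hne; exact hne (Fin.ext (by simp [hk]))
        rw [h0]
        simp only [Fin.val_zero]
        rw [hk, hperiod]
    rw [hre]
    have hP : ∏ k : Fin (r' + 1), v (it (k : ℕ)) ≠ 0 := by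
      apply Finset.prod_ne_zero_iff.mpr
      intro k _
      rcases hv (it (k : ℕ)) with h | h <;> simp [h]
    exact mul_self_pos.mpr hP

lemma exists_pos_circuit (E : Set (SEdge n)) (v : Fin n → ℤ)
    (hv : ∀ i, v i = 1 ∨ v i = -1)
    (D : Set (Fin n)) (hD : D.Nonempty)
    (hstep : ∀ j ∈ D, ∃ i ∈ D, (j, v j * v i, i) ∈ E) :
    HasPosCircuit E := by
  classical
  have hchoice : ∀ j : Fin n, ∃ i : Fin n, j ∈ D → (i ∈ D ∧ (j, v j * v i, i) ∈ E) := by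
    intro j
    by_cases hj : j ∈ D
    · obtain ⟨i, hi, he⟩ := hstep j hj
      exact ⟨i, fun _ => ⟨hi, he⟩⟩
    · exact ⟨j, fun hj' => absurd hj' hj⟩
  choose nxt hnxt using hchoice
  obtain ⟨j₀, hj₀⟩ := hD
  have horb : ∀ k, nxt^[k] j₀ ∈ D := by
    intro k; induction k with
    | zero => exact hj₀
    | succ k ihk => rw [Function.iterate_succ_apply']; exact (hnxt _ ihk).1
  obtain ⟨k, l, hkl, heq⟩ := Finite.exists_ne_map_eq_of_infinite (fun k : ℕ => nxt^[k] j₀)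
  wlog hlt : k < l generalizing k l
  · exact this l k (Ne.symm hkl) heq.symm (by omega)
  have hper : Function.IsPeriodicPt nxt (l - k) (nxt^[k] j₀) := by
    show nxt^[l - k] (nxt^[k] j₀) = nxt^[k] j₀
    rw [← Function.iterate_add_apply, Nat.sub_add_cancel hlt.le]
    exact heq.symm
  have hr : 0 < Function.minimalPeriod nxt (nxt^[k] j₀) :=
    Function.IsPeriodicPt.minimalPeriod_pos (by omega) hper
  refine pos_circuit_of_cycle E v hv (fun m => nxt^[m] (nxt^[k] j₀))
    (Function.minimalPeriod nxt (nxt^[k] j₀)) hr ?_ ?_ ?_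
  · intro m
    have hm : nxt^[m] (nxt^[k] j₀) ∈ D := by
      rw [← Function.iterate_add_apply]; exact horb _
    have h2 := (hnxt _ hm).2
    beta_reduce
    rw [Function.iterate_succ_apply']
    exact h2
  · show nxt^[Function.minimalPeriod nxt (nxt^[k] j₀)] (nxt^[k] j₀) = nxt^[0] (nxt^[k] j₀)
    simp only [Function.iterate_zero_apply]
    exact Function.isPeriodicPt_minimalPeriod nxt (nxt^[k] j₀)
  · intro s t hs ht hst
    exact Function.iterate_injOn_Iio_minimalPeriod (Set.mem_Iio.mpr hs) (Set.mem_Iio.mpr ht) hst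

lemma key (a b : Fin n → ℤ) (hab : ∀ i, a i + 1 ≤ b i)
    (F : (Fin n → ℤ) → Fin n → ℤ)
    (h : ∀ x v, InX' a b x v → ¬ HasPosCircuit (localGraph F x v)) :
    ∀ m : ℕ, ∀ c d : Fin n → ℤ,
      (∀ i, a i ≤ c i ∧ c i ≤ d i ∧ d i ≤ b i) →
      (∑ i, (d i - c i).toNat) ≤ m →
      ∀ p q, (∀ i, c i ≤ p i ∧ p i ≤ d i) → (∀ i, c i ≤ q i ∧ q i ≤ d i) →
      clampV c d (F p) = p → clampV c d (F q) = q → p = q := by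
  intro m
  induction m with
  | zero =>
    intro c d hcd hm p q hp hq _ _
    funext i
    have h0 : (d i - c i).toNat = 0 :=
      Finset.sum_eq_zero_iff.mp (Nat.le_zero.mp hm) i (Finset.mem_univ i)
    have := hp i; have := hq i; omega
  | succ m ih =>
    intro c d hcd hm p q hp hq hfp hfq
    by_contra hpq
    classical
    obtain ⟨c', hc'⟩ : ∃ c' : Fin n → ℤ, ∀ i, c' i = min (p i) (q i) := ⟨_, fun _ => rfl⟩
    obtain ⟨d', hd'⟩ : ∃ d' : Fin n → ℤ, ∀ i, d' i = max (p i) (q i) := ⟨_, fun _ => rfl⟩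
    have hsub : ∀ i, c i ≤ c' i ∧ c' i ≤ d' i ∧ d' i ≤ d i := fun i => by
      rw [hc' i, hd' i]; have := hp i; have := hq i; omega
    have hclamp_comp : ∀ y, clampV c' d' (clampV c d y) = clampV c' d' y :=
      fun y => clampV_clampV c d c' d' y hsub
    obtain ⟨v, hv'⟩ : ∃ v : Fin n → ℤ, ∀ i, v i =
        if p i < q i then 1 else if q i < p i then -1 else if p i < b i then 1 else -1 :=
      ⟨_, fun _ => rfl⟩
    have hv : IsDir v := fun i => by rw [hv' i]; split_ifs <;> simp
    have hvD : ∀ j, p j ≠ q j → (p j < q j ∧ v j = 1) ∨ (q j < p j ∧ v j = -1) := by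
      intro j hj
      have hh := hv' j
      split_ifs at hh with h1 h2 h3
      · exact Or.inl ⟨h1, hh⟩
      · exact Or.inr ⟨h2, hh⟩
      · omega
      · omega
    have hX' : InX' a b p v := by
      refine ⟨fun i => ?_, hv, fun i => ?_⟩
      · have := hcd i; have := hp i; omega
      · simp only [Pi.add_apply]
        have hh := hv' i
        split_ifs at hh <;>
          (rw [hh]; have := hcd i; have := hp i; have := hq i; have := hab i; omega)
    obtain ⟨g, hg⟩ : ∃ g : (Fin n → ℤ) → Fin n → ℤ, ∀ y, g y = clampV c' d' (F y) :=
      ⟨_, fun _ => rfl⟩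
    have hgp : g p = p := by
      rw [hg p, ← hclamp_comp (F p), hfp]
      exact clampV_eq_of_mem _ _ _ (fun i => by rw [hc' i, hd' i]; omega)
    have hgq : g q = q := by
      rw [hg q, ← hclamp_comp (F q), hfq]
      exact clampV_eq_of_mem _ _ _ (fun i => by rw [hc' i, hd' i]; omega)
    by_cases hA : ∀ j, p j ≠ q j →
        ∃ k, p k ≠ q k ∧ 0 < (g (Function.update p j (p j + v j)) k - p k) * v k
    · -- Case A: build a positive circuit, contradiction
      refine h p v hX' ?_
      obtain ⟨i₀, hi₀⟩ := Function.ne_iff.mp hpq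
      refine exists_pos_circuit _ v hv {j | p j ≠ q j} ⟨i₀, hi₀⟩ ?_
      intro j hj
      obtain ⟨k, hk, hout⟩ := hA j hj
      refine ⟨k, hk, ?_⟩
      have hjacg : jac g p v k j = (g (Function.update p j (p j + v j)) k - p k) * v j := by
        unfold jac
        rw [hgp, div_pm _ _ (hv j)]
      have hgeq : jac g p v k j = jac (fun y => clampV c' d' (F y)) p v k j := by
        unfold jac
        rw [hg, hg]
      have hjj : v j * v j = 1 := by rcases hv j with hh | hh <;> rw [hh] <;> norm_num
      have h1 : 0 < jac g p v k j * (v j * v k) := by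
        rw [hjacg]
        have hring : (g (Function.update p j (p j + v j)) k - p k) * v j * (v j * v k)
            = ((g (Function.update p j (p j + v j)) k - p k) * v k) * (v j * v j) := by ring
        rw [hring, hjj, mul_one]
        exact hout
      have hs : v j * v k = 1 ∨ v j * v k = -1 := by
        rcases hv j with hh | hh <;> rcases hv k with hh' | hh' <;> rw [hh, hh'] <;> norm_num
      rcases hs with hs | hs
      · refine Or.inl ⟨hs, ?_⟩
        rw [hs, mul_one] at h1
        rw [hgeq] at h1
        exact (jac_clamp c' d' F p v k j (hv j)).1 h1
      · refine Or.inr ⟨hs, ?_⟩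
        rw [hs] at h1
        have h2 : jac g p v k j < 0 := by nlinarith
        rw [hgeq] at h2
        exact (jac_clamp c' d' F p v k j (hv j)).2 h2
    · -- Case B: descent
      push_neg at hA
      obtain ⟨js, hjD, hB⟩ := hA
      obtain ⟨γ, hγdef⟩ : ∃ γ, γ = Function.update p js (p js + v js) := ⟨_, rfl⟩
      have hγapp : ∀ k, γ k = if k = js then p js + v js else p k := by
        intro k; rw [hγdef, Function.update_apply]
      have hvjs := hvD js hjD
      have hγab : ∀ i, a i ≤ γ i ∧ γ i ≤ b i := by
        intro i
        have hpv := hX'.2.2 i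
        simp only [Pi.add_apply] at hpv
        rw [hγapp i]
        split_ifs with hi
        · subst hi; exact hpv
        · have := hcd i; have := hp i; omega
      have hγc'd' : ∀ i, c' i ≤ γ i ∧ γ i ≤ d' i := by
        intro i
        rw [hγapp i, hc' i, hd' i]
        split_ifs with hi
        · subst hi
          rcases hvjs with ⟨hlt, hvk⟩ | ⟨hlt, hvk⟩ <;> rw [hvk] <;> omega
        · omega
      have hγcd : ∀ i, c i ≤ γ i ∧ γ i ≤ d i := fun i => by
        have := hγc'd' i; have := hsub i; omega
      have hgγ : g γ = p := by
        funext k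
        rw [hg γ]
        have hbnd := clampV_mem c' d' (F γ) (fun i => by have := hsub i; omega) k
        by_cases hk : p k = q k
        · rw [hc' k, hd' k] at hbnd; omega
        · have hout := hB k hk
          rw [← hγdef, hg γ] at hout
          rw [hc' k, hd' k] at hbnd
          rcases hvD k hk with ⟨hlt, hvk⟩ | ⟨hlt, hvk⟩ <;> rw [hvk] at hout
          · rw [mul_one] at hout; omega
          · rw [mul_neg_one] at hout; omega
      obtain ⟨c₂, hc₂⟩ : ∃ c₂ : Fin n → ℤ, ∀ i, c₂ i = min (γ i) (q i) := ⟨_, fun _ => rfl⟩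
      obtain ⟨d₂, hd₂⟩ : ∃ d₂ : Fin n → ℤ, ∀ i, d₂ i = max (γ i) (q i) := ⟨_, fun _ => rfl⟩
      have hcd₂ : ∀ i, a i ≤ c₂ i ∧ c₂ i ≤ d₂ i ∧ d₂ i ≤ b i := by
        intro i
        rw [hc₂ i, hd₂ i]
        have := hγab i; have := hcd i; have := hq i; omega
      have hsub₂ : ∀ i, c' i ≤ c₂ i ∧ c₂ i ≤ d₂ i ∧ d₂ i ≤ d' i := by
        intro i
        rw [hc₂ i, hd₂ i]
        have := hγc'd' i
        have : c' i ≤ q i ∧ q i ≤ d' i := by rw [hc' i, hd' i]; omega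
        have := hγc'd' i
        omega
      have hm₂ : (∑ i, (d₂ i - c₂ i).toNat) ≤ m := by
        have hsum : (∑ i, (d₂ i - c₂ i).toNat) < ∑ i, (d i - c i).toNat := by
          apply Finset.sum_lt_sum
          · intro i _
            rw [hc₂ i, hd₂ i]
            have := hγcd i; have := hq i; omega
          · refine ⟨js, Finset.mem_univ js, ?_⟩
            have hγjs : γ js = p js + v js := by rw [hγapp js]; simp
            rw [hc₂ js, hd₂ js, hγjs]
            have := hp js; have := hq js
            rcases hvjs with ⟨hlt, hvk⟩ | ⟨hlt, hvk⟩ <;> rw [hvk] <;> omega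
        omega
      have hfγ₂ : clampV c₂ d₂ (F γ) = γ := by
        rw [← clampV_clampV c' d' c₂ d₂ (F γ) hsub₂, ← hg γ, hgγ]
        funext k
        simp only [clampV]
        rw [hc₂ k, hd₂ k, hγapp k]
        split_ifs with hk
        · subst hk
          rcases hvjs with ⟨hlt, hvk⟩ | ⟨hlt, hvk⟩ <;> rw [hvk] <;> omega
        · omega
      have hfq₂ : clampV c₂ d₂ (F q) = q := by
        rw [← clampV_clampV c' d' c₂ d₂ (F q) hsub₂, ← hg q, hgq]
        exact clampV_eq_of_mem _ _ _ (fun i => by rw [hc₂ i, hd₂ i]; omega)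
      have hγq := ih c₂ d₂ hcd₂ hm₂ γ q
        (fun i => by rw [hc₂ i, hd₂ i]; omega)
        (fun i => by rw [hc₂ i, hd₂ i]; omega)
        hfγ₂ hfq₂
      apply hpq
      have hgqp : g q = p := by rw [← hγq]; exact hgγ
      exact hgqp.symm.trans hgq

end RCHelpers

/-- If no local interaction graph `𝐆_F(x,v)` has a positive circuit, then
`F` has at most one fixed point. -/
theorem stmt1 {n : ℕ} (a b : Fin n → ℤ) (hab : ∀ i, a i + 1 ≤ b i)
    (F : (Fin n → ℤ) → Fin n → ℤ)
    (hF : ∀ x ∈ StateSpace a b, F x ∈ StateSpace a b)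
    (h : ∀ x v, InX' a b x v → ¬ HasPosCircuit (localGraph F x v)) :
    ∀ x ∈ StateSpace a b, ∀ y ∈ StateSpace a b, F x = x → F y = y → x = y := by
  intro x hx y hy hfx hfy
  refine key a b hab F h (∑ i, (b i - a i).toNat) a b
    (fun i => ⟨le_refl _, by have := hab i; omega, le_refl _⟩) le_rfl x y
    (fun i => hx i) (fun i => hy i) ?_ ?_
  · rw [clampV_eq_of_mem _ _ _ (fun i => hF x hx i)]; exact hfx
  · rw [clampV_eq_of_mem _ _ _ (fun i => hF y hy i)]; exact hfy
end

section
/- Let F be a map from {0,1}^n to itself. If I ⊆ {1,…,n} is a set of vertices such that every positive circuit of the global interaction graph 𝐆(F) (the union over all (x,v) ∈ X' of the local interaction graphs 𝐆_F(x,v)) has at least one vertex in I, then the number of fixed points of F is at most 2^{|I|}. -/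
lemma mem01 {n : ℕ} {x : Fin n → ℤ}
    (hx : x ∈ StateSpace (fun _ : Fin n => (0:ℤ)) (fun _ => 1)) (i : Fin n) :
    x i = 0 ∨ x i = 1 := by
  have h1 : (0:ℤ) ≤ x i := (hx i).1
  have h2 : x i ≤ 1 := (hx i).2
  omega

lemma mem01' {n : ℕ} {x : Fin n → ℤ} (hx : ∀ i, x i = 0 ∨ x i = 1) :
    x ∈ StateSpace (fun _ : Fin n => (0:ℤ)) (fun _ => 1) := by
  intro i
  show (0:ℤ) ≤ x i ∧ x i ≤ 1
  have := hx i; omega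

lemma step_lemma {n : ℕ} (F : (Fin n → ℤ) → Fin n → ℤ)
    (hF : ∀ x ∈ StateSpace (fun _ : Fin n => (0 : ℤ)) (fun _ => 1),
      F x ∈ StateSpace (fun _ : Fin n => (0 : ℤ)) (fun _ => 1))
    {x y : Fin n → ℤ}
    (hx : x ∈ StateSpace (fun _ : Fin n => (0 : ℤ)) (fun _ => 1))
    (hy : y ∈ StateSpace (fun _ : Fin n => (0 : ℤ)) (fun _ => 1))
    (hfx : F x = x) (hfy : F y = y) {i : Fin n} (hi : x i ≠ y i) :
    ∃ j, x j ≠ y j ∧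
      (j, (x i - y i) * (x j - y j), i) ∈
        globalGraph (fun _ : Fin n => (0 : ℤ)) (fun _ => 1) F := by
  classical
  set L : List (Fin n) := (Finset.univ.filter (fun l => x l ≠ y l)).toList with hL
  have hLnd : L.Nodup := Finset.nodup_toList _
  have hLmem : ∀ l, l ∈ L ↔ x l ≠ y l := by intro l; simp [hL]
  set m := L.length with hm
  set z : ℕ → Fin n → ℤ := fun k l => if l ∈ L.take k then y l else x l with hz
  have hz0 : z 0 = x := by funext l; simp [hz]
  have hzm : z m = y := by
    funext l
    simp only [hz, hm, List.take_length]
    by_cases h : l ∈ L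
    · simp [h]
    · rw [if_neg h]; by_contra hc; exact h ((hLmem l).2 hc)
  have hzX : ∀ k, z k ∈ StateSpace (fun _ : Fin n => (0:ℤ)) (fun _ => 1) := by
    intro k; apply mem01'; intro l
    by_cases h : l ∈ L.take k
    · simpa [hz, h] using mem01 hy l
    · simpa [hz, h] using mem01 hx l
  have hgetnotin : ∀ (k : ℕ) (hk : k < m), L.get ⟨k,hk⟩ ∉ L.take k := by
    intro k hk h
    have h2 : L.get ⟨k,hk⟩ ∈ L.drop k := by
      have h0 : 0 < (L.drop k).length := by simp [hm] at hk ⊢; omega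
      have : (L.drop k)[0]'h0 = L[k]'hk := by rw [List.getElem_drop]; norm_num
      rw [List.get_eq_getElem, ← this]
      exact List.getElem_mem h0
    exact (List.disjoint_take_drop hLnd le_rfl) h h2
  have hstep : ∀ (k : ℕ) (hk : k < m),
      z (k+1) = Function.update (z k) (L.get ⟨k,hk⟩) (y (L.get ⟨k,hk⟩)) := by
    intro k hk
    funext l
    have hk' : k < L.length := hk
    rcases eq_or_ne l (L.get ⟨k,hk⟩) with rfl | hne
    · rw [Function.update_self]
      have hmem2 : L.get ⟨k,hk⟩ ∈ L.take (k+1) := by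
        rw [List.take_succ, List.getElem?_eq_getElem hk']
        exact List.mem_append.2 (Or.inr (by simp))
      have hmem2' : L[k]'hk' ∈ List.take (k+1) L := hmem2
      simp [hz, hmem2']
    · rw [Function.update_of_ne hne]
      have hiff : l ∈ L.take (k+1) ↔ l ∈ L.take k := by
        rw [List.take_succ, List.getElem?_eq_getElem hk', List.mem_append]
        exact or_iff_left (by simpa using hne)
      simp only [hz]
      rw [if_congr hiff rfl rfl]
  -- find a step where F _ i changes in the right direction
  have hsum : ∑ k ∈ Finset.range m, (F (z (k+1)) i - F (z k) i) = y i - x i := by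
    rw [Finset.sum_range_sub (fun k => F (z k) i)]
    rw [hz0, hzm, hfx, hfy]
  have hexk : ∃ k, ∃ hk : k < m, 0 < (y i - x i) * (F (z (k+1)) i - F (z k) i) := by
    by_contra hc
    push_neg at hc
    have hle : ∑ k ∈ Finset.range m, (y i - x i) * (F (z (k+1)) i - F (z k) i) ≤ 0 :=
      Finset.sum_nonpos (fun k hk => hc k (Finset.mem_range.1 hk))
    rw [← Finset.mul_sum, hsum] at hle
    have hne0 : (y i - x i) ≠ 0 := sub_ne_zero.2 (Ne.symm hi)
    exact absurd hle (not_le.2 (mul_self_pos.2 hne0))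
  obtain ⟨k, hk, hpos⟩ := hexk
  set j := L.get ⟨k, hk⟩ with hj
  have hjD : x j ≠ y j := (hLmem j).1 (by rw [hj]; exact List.get_mem L ⟨k, hk⟩)
  have hzkj : z k j = x j := by
    simp only [hz]; rw [if_neg (hgetnotin k hk)]
  refine ⟨j, hjD, ?_⟩
  -- direction vector
  set v : Fin n → ℤ := fun l => if z k l = 0 then 1 else -1 with hv
  have hdir : IsDir v := by intro l; by_cases h : z k l = 0 <;> simp [hv, h]
  have hzv : (z k + v) ∈ StateSpace (fun _ : Fin n => (0:ℤ)) (fun _ => 1) := by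
    apply mem01'; intro l
    rcases mem01 (hzX k) l with h | h <;> simp [hv, h, Pi.add_apply]
  have hInX' : InX' (fun _ : Fin n => (0:ℤ)) (fun _ => 1) (z k) v := ⟨hzX k, hdir, hzv⟩
  have hvj : v j = y j - x j := by
    rcases mem01 hx j with h | h <;> rcases mem01 hy j with h' | h' <;>
      simp [hv, hzkj, h, h'] at hjD ⊢ <;> omega
  have hupd : Function.update (z k) j (z k j + v j) = z (k+1) := by
    rw [hstep k hk, hzkj, hvj, ← hj]; ring_nf
  -- compute jacobian
  have hFz1 := mem01 (hF _ (hzX (k+1))) i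
  have hFz0 := mem01 (hF _ (hzX k)) i
  have hnum : F (z (k+1)) i - F (z k) i = y i - x i := by
    rcases mem01 hx i with h | h <;> rcases mem01 hy i with h' | h' <;>
      rw [h, h'] at hpos ⊢ <;> omega
  have hjac : jac F (z k) v i j = (x i - y i) * (x j - y j) := by
    unfold jac
    rw [hupd, hnum, hvj]
    rcases mem01 hx i with h1 | h1 <;> rcases mem01 hy i with h2 | h2 <;>
      rcases mem01 hx j with h3 | h3 <;> rcases mem01 hy j with h4 | h4 <;>
      simp_all <;> omega
  have hmem : ((j, (x i - y i) * (x j - y j), i) : SEdge n) ∈ localGraph F (z k) v := by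
    have hs : (x i - y i) * (x j - y j) = 1 ∨ (x i - y i) * (x j - y j) = -1 := by
      rcases mem01 hx i with h1 | h1 <;> rcases mem01 hy i with h2 | h2 <;>
        rcases mem01 hx j with h3 | h3 <;> rcases mem01 hy j with h4 | h4 <;>
        simp only [h1, h2, h3, h4] at hi hjD ⊢ <;> omega
    rcases hs with hs | hs
    · left; exact ⟨hs, by rw [hjac, hs]; norm_num⟩
    · right; exact ⟨hs, by rw [hjac, hs]; norm_num⟩
  exact Set.mem_iUnion.2 ⟨z k, Set.mem_iUnion.2 ⟨v, Set.mem_iUnion.2 ⟨hInX', hmem⟩⟩⟩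

lemma key_lemma {n : ℕ} (F : (Fin n → ℤ) → Fin n → ℤ)
    (hF : ∀ x ∈ StateSpace (fun _ : Fin n => (0 : ℤ)) (fun _ => 1),
      F x ∈ StateSpace (fun _ : Fin n => (0 : ℤ)) (fun _ => 1))
    (I : Finset (Fin n))
    (hI : IsPFVS (globalGraph (fun _ : Fin n => (0 : ℤ)) (fun _ => 1) F) I)
    {x y : Fin n → ℤ}
    (hx : x ∈ StateSpace (fun _ : Fin n => (0 : ℤ)) (fun _ => 1))
    (hy : y ∈ StateSpace (fun _ : Fin n => (0 : ℤ)) (fun _ => 1))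
    (hfx : F x = x) (hfy : F y = y)
    (hagree : ∀ i ∈ I, x i = y i) : x = y := by
  classical
  by_contra hxy
  obtain ⟨i0, hi0⟩ : ∃ i0, x i0 ≠ y i0 := by
    by_contra hc; push_neg at hc; exact hxy (funext hc)
  set g : Fin n → Fin n :=
    fun i => if h : x i ≠ y i then (step_lemma F hF hx hy hfx hfy h).choose else i with hg
  have hgspec : ∀ i, x i ≠ y i → (x (g i) ≠ y (g i)) ∧
      ((g i, (x i - y i) * (x (g i) - y (g i)), i) ∈
        globalGraph (fun _ : Fin n => (0:ℤ)) (fun _ => 1) F) := by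
    intro i hi
    have h1 := (step_lemma F hF hx hy hfx hfy hi).choose_spec
    have h2 : g i = (step_lemma F hF hx hy hfx hfy hi).choose := by
      simp only [hg]; rw [dif_pos hi]
    rw [h2]
    exact h1
  have hiter : ∀ k, x (g^[k] i0) ≠ y (g^[k] i0) := by
    intro k; induction k with
    | zero => simpa using hi0
    | succ k ih => rw [Function.iterate_succ_apply']; exact (hgspec _ ih).1
  obtain ⟨p, q, hpq, heq⟩ : ∃ p q : ℕ, p < q ∧ g^[p] i0 = g^[q] i0 := by
    obtain ⟨p, q, hne, h⟩ := Finite.exists_ne_map_eq_of_infinite (fun k : ℕ => g^[k] i0)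
    rcases Ne.lt_or_gt hne with hlt | hlt
    · exact ⟨p, q, hlt, h⟩
    · exact ⟨q, p, hlt, h.symm⟩
  set u := g^[p] i0 with hu
  have hper : Function.IsPeriodicPt g (q - p) u := by
    show g^[q-p] u = u
    rw [hu, ← Function.iterate_add_apply, Nat.sub_add_cancel hpq.le]
    exact heq.symm
  set r := Function.minimalPeriod g u with hr
  have hr0 : 0 < r := hper.minimalPeriod_pos (Nat.sub_pos_of_lt hpq)
  have hru : g^[r] u = u := Function.isPeriodicPt_minimalPeriod g u
  have hinj := Function.iterate_injOn_Iio_minimalPeriod (f := g) (x := u)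
  have huiter : ∀ k, x (g^[k] u) ≠ y (g^[k] u) := by
    intro k; rw [hu, ← Function.iterate_add_apply]; exact hiter _
  set σ : Fin n → ℤ := fun l => x l - y l with hσ
  set e : ℕ → SEdge n :=
    fun k => (g^[r-k] u, σ (g^[r-k-1] u) * σ (g^[r-k] u), g^[r-k-1] u) with he
  set c : List (SEdge n) := (List.range r).map e with hc
  have hclen : c.length = r := by simp [hc]
  have hcget : ∀ (k : ℕ) (hk : k < c.length), c.get ⟨k, hk⟩ = e k := by
    intro k hk
    simp [hc]
  have hedge : ∀ k, k < r → e k ∈ globalGraph (fun _ : Fin n => (0:ℤ)) (fun _ => 1) F := by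
    intro k hk
    have h2 : g^[r-k] u = g (g^[r-k-1] u) := by
      conv_lhs => rw [show r - k = (r - k - 1) + 1 from by omega]
      rw [Function.iterate_succ_apply']
    have h3 := (hgspec _ (huiter (r-k-1))).2
    simp only [he, hσ]
    rw [h2]
    exact h3
  have hcirc : IsCircuit (globalGraph (fun _ : Fin n => (0:ℤ)) (fun _ => 1) F) c := by
    refine ⟨?_, ?_, ?_, ?_, ?_⟩
    · rw [hc]
      intro hnil
      rw [List.map_eq_nil_iff, List.range_eq_nil] at hnil
      omega
    · intro ed hed
      rw [hc, List.mem_map] at hed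
      obtain ⟨k, hk, rfl⟩ := hed
      exact hedge k (List.mem_range.1 hk)
    · intro k h
      rw [hcget, hcget]
      have hk1 : k + 1 < r := by rw [hclen] at h; exact h
      show g^[r-k-1] u = g^[r-(k+1)] u
      congr 1
    · have hlt1 : c.length - 1 < c.length := by rw [hclen]; omega
      have h1 : c.getLast? = some (e (r-1)) := by
        rw [List.getLast?_eq_getElem?, List.getElem?_eq_getElem hlt1]
        simp only [hclen]
        exact congrArg some (hcget (r-1) (by rw [hclen]; omega))
      have hlt0 : 0 < c.length := by rw [hclen]; omega
      have h2 : c.head? = some (e 0) := by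
        rw [List.head?_eq_getElem?, List.getElem?_eq_getElem hlt0]
        exact congrArg some (hcget 0 hlt0)
      rw [h1, h2]
      simp only [Option.map_some, he]
      congr 1
      rw [show r - (r-1) - 1 = 0 from by omega, show r - 0 = r from by omega, hru]
      rfl
    · rw [hc, List.map_map]
      apply List.Nodup.map_on _ (List.nodup_range (n := r))
      intro k hk k' hk' hfeq
      rw [List.mem_range] at hk hk'
      simp only [Function.comp, he] at hfeq
      -- hfeq : g^[r-k] u = g^[r-k'] u
      have norm : ∀ j, j < r → (g^[r-j] u : Fin n) = g^[(r-j) % r] u := by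
        intro j hj
        rcases Nat.eq_zero_or_pos j with rfl | hjpos
        · simp only [Nat.sub_zero, Nat.mod_self]
          simpa using hru
        · rw [Nat.mod_eq_of_lt (by omega)]
      rw [norm k hk, norm k' hk'] at hfeq
      have hmod := hinj (Set.mem_Iio.2 (Nat.mod_lt _ hr0)) (Set.mem_Iio.2 (Nat.mod_lt _ hr0)) hfeq
      have hmk : (r - k) % r = if k = 0 then 0 else r - k := by
        rcases Nat.eq_zero_or_pos k with rfl | h
        · simp
        · rw [if_neg (by omega), Nat.mod_eq_of_lt (by omega)]
      have hmk' : (r - k') % r = if k' = 0 then 0 else r - k' := by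
        rcases Nat.eq_zero_or_pos k' with rfl | h
        · simp
        · rw [if_neg (by omega), Nat.mod_eq_of_lt (by omega)]
      rw [hmk, hmk'] at hmod
      split_ifs at hmod <;> omega
  have hprodpos : 0 < (c.map (fun e => e.2.1)).prod := by
    have hmap : c.map (fun e => e.2.1)
        = (List.range r).map (fun k => σ (g^[r-k-1] u) * σ (g^[r-k] u)) := by
      rw [hc, List.map_map]; rfl
    have hlist : (c.map (fun e => e.2.1)).prod
        = ∏ k ∈ Finset.range r, (σ (g^[r-k-1] u) * σ (g^[r-k] u)) := by
      rw [hmap]; rfl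
    rw [hlist, Finset.prod_mul_distrib]
    have hQ : ∏ k ∈ Finset.range r, σ (g^[r-k-1] u) = ∏ k ∈ Finset.range r, σ (g^[k] u) := by
      rw [← Finset.prod_range_reflect (fun k => σ (g^[k] u)) r]
      apply Finset.prod_congr rfl
      intro k hk
      rw [Finset.mem_range] at hk
      congr 2
      omega
    have hP : ∏ k ∈ Finset.range r, σ (g^[r-k] u) = ∏ k ∈ Finset.range r, σ (g^[k] u) := by
      have h1 : ∏ k ∈ Finset.range r, σ (g^[r-k] u)
          = ∏ k ∈ Finset.range r, σ (g^[k+1] u) := by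
        rw [← Finset.prod_range_reflect (fun k => σ (g^[k+1] u)) r]
        apply Finset.prod_congr rfl
        intro k hk
        rw [Finset.mem_range] at hk
        congr 2
        omega
      obtain ⟨m, hm'⟩ : ∃ m, r = m + 1 := ⟨r - 1, by omega⟩
      rw [h1, hm', Finset.prod_range_succ (fun k => σ (g^[k+1] u)) m,
        Finset.prod_range_succ' (fun k => σ (g^[k] u)) m]
      congr 1
      rw [← hm', hru]
      rfl
    rw [hQ, hP]
    apply mul_self_pos.2
    rw [Finset.prod_ne_zero_iff]
    intro k _
    exact sub_ne_zero.2 (huiter k)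
  obtain ⟨i, hiI, hic⟩ := hI c ⟨hcirc, hprodpos⟩
  rw [hc, List.map_map, List.mem_map] at hic
  obtain ⟨k, hk, hik⟩ := hic
  rw [List.mem_range] at hk
  have : x i ≠ y i := by
    rw [← hik]
    exact huiter (r - k)
  exact this (hagree i hiI)

/-- Boolean case: if every positive circuit of the global interaction
graph `𝐆(F)` has a vertex in `I`, then `F` has at most `2 ^ |I|` fixed
points. -/
theorem stmt2 {n : ℕ} (F : (Fin n → ℤ) → Fin n → ℤ)
    (hF : ∀ x ∈ StateSpace (fun _ : Fin n => (0 : ℤ)) (fun _ => 1),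
      F x ∈ StateSpace (fun _ : Fin n => (0 : ℤ)) (fun _ => 1))
    (I : Finset (Fin n))
    (hI : IsPFVS (globalGraph (fun _ : Fin n => (0 : ℤ)) (fun _ => 1) F) I) :
    {x ∈ StateSpace (fun _ : Fin n => (0 : ℤ)) (fun _ => 1) | F x = x}.ncard
      ≤ 2 ^ I.card := by
  classical
  set S := {x ∈ StateSpace (fun _ : Fin n => (0 : ℤ)) (fun _ => 1) | F x = x} with hS
  have hinj : Set.InjOn (fun x : Fin n → ℤ => fun i : ↥I => decide (x i = 1)) S := by
    intro x hxS y hyS hxy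
    have hxmem : x ∈ StateSpace (fun _ : Fin n => (0 : ℤ)) (fun _ => 1) := hxS.1
    have hymem : y ∈ StateSpace (fun _ : Fin n => (0 : ℤ)) (fun _ => 1) := hyS.1
    apply key_lemma F hF I hI hxmem hymem hxS.2 hyS.2
    intro i hiI
    have h := congrFun hxy ⟨i, hiI⟩
    simp only [decide_eq_decide] at h
    rcases mem01 hxmem i with h1 | h1 <;> rcases mem01 hymem i with h2 | h2 <;>
      rw [h1, h2] at h ⊢ <;> simp_all
  have hle := Set.ncard_le_ncard_of_injOn _ (fun a _ => Set.mem_univ _) hinj Set.finite_univ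
  calc S.ncard ≤ (Set.univ : Set (↥I → Bool)).ncard := hle
    _ = 2 ^ I.card := by
        rw [Set.ncard_univ, Nat.card_eq_fintype_card]
        simp
end

section
/- Let X = ∏_{i=1}^n X_i be a product of n finite intervals of integers, each of cardinality at least 2, and let F be a map from X to itself. If for every (x,v) ∈ X' the local interaction graph with thresholds G_F(x,v) has no positive circuit, then the asynchronous state transition graph Γ(F) has exactly one attractor. -/
private lemma sign_cases {c : ℤ} (hc : c ≠ 0) : c.sign = 1 ∨ c.sign = -1 := by
  rcases hc.lt_or_gt with h | h
  · right; exact Int.sign_eq_neg_one_iff_neg.mpr h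
  · left; exact Int.sign_eq_one_iff_pos.mpr h

private lemma sign_eq_of_one_le {s c : ℤ} (hs : s = 1 ∨ s = -1) (h : 1 ≤ s * c) :
    c.sign = s := by
  rcases hs with rfl | rfl
  · exact Int.sign_eq_one_iff_pos.mpr (by linarith)
  · exact Int.sign_eq_neg_one_iff_neg.mpr (by linarith)

private def rdist {n : ℕ} (z y : Fin n → ℤ) : ℕ := ∑ i, (y i - z i).natAbs

private lemma rdist_comm {n : ℕ} (z y : Fin n → ℤ) : rdist z y = rdist y z :=
  Finset.sum_congr rfl (fun i _ => by rw [← Int.natAbs_neg, neg_sub])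

private lemma rdist_eq_zero {n : ℕ} {z y : Fin n → ℤ} (h : rdist z y = 0) : z = y := by
  funext i
  have h2 := (Finset.sum_eq_zero_iff).mp h i (Finset.mem_univ i)
  omega

private lemma rdist_update {n : ℕ} {z y : Fin n → ℤ} {j : Fin n} (hj : z j ≠ y j) :
    rdist (Function.update z j (z j + (y j - z j).sign)) y + 1 = rdist z y := by
  unfold rdist
  rw [← Finset.sum_erase_add _ _ (Finset.mem_univ j),
      ← Finset.sum_erase_add _ _ (Finset.mem_univ j)]
  have h1 : ∀ i ∈ Finset.univ.erase j,
      (y i - Function.update z j (z j + (y j - z j).sign) i).natAbs = (y i - z i).natAbs := by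
    intro i hi
    rw [Function.update_of_ne (Finset.ne_of_mem_erase hi)]
  rw [Finset.sum_congr rfl h1]
  have hne : y j - z j ≠ 0 := sub_ne_zero.mpr (Ne.symm hj)
  have h2 : (y j - Function.update z j (z j + (y j - z j).sign) j).natAbs + 1
      = (y j - z j).natAbs := by
    rw [Function.update_self]
    rcases hne.lt_or_gt with h | h
    · rw [Int.sign_eq_neg_one_iff_neg.mpr h]; omega
    · rw [Int.sign_eq_one_iff_pos.mpr h]; omega
  omega

private lemma exists_cycle_s3 {α : Type*} [Finite α] (σ : α → α) (S : Set α)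
    (hσ : ∀ x ∈ S, σ x ∈ S) (j₀ : α) (hj : j₀ ∈ S) :
    ∃ (c : α) (p : ℕ), 0 < p ∧ c ∈ S ∧ σ^[p] c = c ∧
      ∀ s t, s < p → t < p → σ^[s] c = σ^[t] c → s = t := by
  classical
  have hiter : ∀ t, σ^[t] j₀ ∈ S := by
    intro t; induction t with
    | zero => simpa
    | succ t ih => rw [Function.iterate_succ_apply']; exact hσ _ ih
  obtain ⟨t1, t2, hne, heq⟩ : ∃ t1 t2, t1 ≠ t2 ∧ σ^[t1] j₀ = σ^[t2] j₀ :=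
    Finite.exists_ne_map_eq_of_infinite (fun t : ℕ => σ^[t] j₀)
  wlog hlt : t1 < t2 generalizing t1 t2
  · exact this t2 t1 hne.symm heq.symm (by omega)
  set c := σ^[t1] j₀ with hc
  have hkey : ∃ k, 0 < k ∧ σ^[k] c = c := by
    refine ⟨t2 - t1, by omega, ?_⟩
    rw [hc, ← Function.iterate_add_apply, show t2 - t1 + t1 = t2 by omega]
    exact heq.symm
  set p := Nat.find hkey with hpdef
  have hp := Nat.find_spec hkey
  refine ⟨c, p, hp.1, hiter t1, hp.2, ?_⟩
  intro s t hs ht hst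
  by_contra hne'
  wlog h2 : s < t generalizing s t
  · exact this t s ht hs hst.symm (Ne.symm hne') (by omega)
  have hper : σ^[s + (p - t)] c = c := by
    have h3 : σ^[p - t] (σ^[t] c) = c := by
      rw [← Function.iterate_add_apply, show p - t + t = p by omega]; exact hp.2
    calc σ^[s + (p - t)] c = σ^[p - t] (σ^[s] c) := by
            rw [add_comm, Function.iterate_add_apply]
      _ = σ^[p - t] (σ^[t] c) := by rw [hst]
      _ = c := h3
  have hle : p ≤ s + (p - t) := hpdef ▸ Nat.find_le ⟨by omega, hper⟩
  omega

private lemma prod_pm {l : List ℤ} (h : ∀ x ∈ l, x = 1 ∨ x = -1) :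
    l.prod = 1 ∨ l.prod = -1 := by
  induction l with
  | nil => simp
  | cons x l ih =>
    rcases h x (by simp) with h1 | h1 <;>
      rcases ih (fun y hy => h y (by simp [hy])) with h2 | h2 <;> simp [h1, h2]
private lemma edge_mem_localGraphT {n : ℕ} (F : (Fin n → ℤ) → Fin n → ℤ)
    (z y w : Fin n → ℤ) (i j : Fin n)
    (hwj : w j = (y j - z j).sign) (hwi : w i = (y i - z i).sign)
    (hzj : z j ≠ y j) (hzi : z i ≠ y i)
    (hFz : (y i - z i).sign * (F z i - z i) ≤ 0)
    (hFzj : 1 ≤ (y i - z i).sign * (F (Function.update z j (z j + (y j - z j).sign)) i - z i)) :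
    (j, w i * w j, i) ∈ localGraphT F z w := by
  set z' := Function.update z j (z j + (y j - z j).sign) with hz'def
  have hupd : Function.update z j (z j + w j) = z' := by rw [hwj]
  have hjac : jac F z w i j = (F z' i - F z i) / w j := by
    unfold jac; rw [hupd]
  rcases sign_cases (sub_ne_zero.mpr (Ne.symm hzi)) with hsi | hsi <;>
    rcases sign_cases (sub_ne_zero.mpr (Ne.symm hzj)) with hsj | hsj <;>
    rw [hsi] at hFz hFzj hwi <;> rw [hsj] at hwj <;>
    refine ⟨?_, ?_⟩
  -- case si = 1, sj = 1
  · refine Or.inl ⟨by rw [hwi, hwj]; norm_num, ?_⟩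
    rw [hjac, hwj]
    have h2 : (F z' i - F z i) / (1:ℤ) = F z' i - F z i := by simp
    rw [h2]; linarith
  · show BothSides _ _ _
    rw [hupd, hwi]
    refine Or.inl ⟨?_, ?_⟩
    · have h1 : (F z i : ℚ) ≤ (z i : ℚ) := by exact_mod_cast (by linarith : F z i ≤ z i)
      push_cast; linarith
    · have h1 : (z i : ℚ) + 1 ≤ (F z' i : ℚ) := by exact_mod_cast (by linarith : z i + 1 ≤ F z' i)
      push_cast; linarith
  -- case si = 1, sj = -1
  · refine Or.inr ⟨by rw [hwi, hwj]; norm_num, ?_⟩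
    rw [hjac, hwj]
    have h2 : (F z' i - F z i) / (-1:ℤ) = -(F z' i - F z i) := by simp
    rw [h2]; linarith
  · show BothSides _ _ _
    rw [hupd, hwi]
    refine Or.inl ⟨?_, ?_⟩
    · have h1 : (F z i : ℚ) ≤ (z i : ℚ) := by exact_mod_cast (by linarith : F z i ≤ z i)
      push_cast; linarith
    · have h1 : (z i : ℚ) + 1 ≤ (F z' i : ℚ) := by exact_mod_cast (by linarith : z i + 1 ≤ F z' i)
      push_cast; linarith
  -- case si = -1, sj = 1
  · refine Or.inr ⟨by rw [hwi, hwj]; norm_num, ?_⟩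
    rw [hjac, hwj]
    have h2 : (F z' i - F z i) / (1:ℤ) = F z' i - F z i := by simp
    rw [h2]; linarith
  · show BothSides _ _ _
    rw [hupd, hwi]
    refine Or.inr ⟨?_, ?_⟩
    · have h1 : (F z' i : ℚ) ≤ (z i : ℚ) - 1 := by exact_mod_cast (by linarith : F z' i ≤ z i - 1)
      push_cast; linarith
    · have h1 : (z i : ℚ) ≤ (F z i : ℚ) := by exact_mod_cast (by linarith : z i ≤ F z i)
      push_cast; linarith
  -- case si = -1, sj = -1
  · refine Or.inl ⟨by rw [hwi, hwj]; norm_num, ?_⟩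
    rw [hjac, hwj]
    have h2 : (F z' i - F z i) / (-1:ℤ) = -(F z' i - F z i) := by simp
    rw [h2]; linarith
  · show BothSides _ _ _
    rw [hupd, hwi]
    refine Or.inr ⟨?_, ?_⟩
    · have h1 : (F z' i : ℚ) ≤ (z i : ℚ) - 1 := by exact_mod_cast (by linarith : F z' i ≤ z i - 1)
      push_cast; linarith
    · have h1 : (z i : ℚ) ≤ (F z i : ℚ) := by exact_mod_cast (by linarith : z i ≤ F z i)
      push_cast; linarith

private lemma hasPosCircuit_of_cycle {n : ℕ} (E : Set (SEdge n)) (w : Fin n → ℤ)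
    (hw : ∀ i, w i = 1 ∨ w i = -1) (σ : Fin n → Fin n) (c : Fin n) (p : ℕ)
    (hp : 0 < p) (hper : σ^[p] c = c)
    (hinj : ∀ s t, s < p → t < p → σ^[s] c = σ^[t] c → s = t)
    (hedge : ∀ t : ℕ, ((σ^[t] c, w (σ^[t+1] c) * w (σ^[t] c), σ^[t+1] c) : SEdge n) ∈ E) :
    HasPosCircuit E := by
  classical
  set f : ℕ → SEdge n := fun t => (σ^[t] c, w (σ^[t+1] c) * w (σ^[t] c), σ^[t+1] c) with hf
  refine ⟨(List.range p).map f, ⟨?_, ?_, ?_, ?_, ?_⟩, ?_⟩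
  · intro hnil
    have : ((List.range p).map f).length = p := by simp
    rw [hnil] at this
    simp at this; omega
  · intro e he
    rw [List.mem_map] at he
    obtain ⟨t, _, rfl⟩ := he
    exact hedge t
  · intro k hk
    simp only [List.get_eq_getElem, List.getElem_map, List.getElem_range]
    rfl
  · obtain ⟨q, rfl⟩ : ∃ q, p = q + 1 := ⟨p - 1, by omega⟩
    have h1 : ((List.range (q+1)).map f).head? = some (f 0) := by
      rw [List.range_succ_eq_map]
      simp
    have h2 : ((List.range (q+1)).map f).getLast? = some (f q) := by
      rw [List.range_succ, List.map_append]
      exact List.getLast?_concat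
    rw [h1, h2]
    simp only [Option.map_some]
    have : σ^[q+1] c = σ^[0] c := by simpa using hper
    simp [hf, this]
    exact hper
  · have hmap : ((List.range p).map f).map (fun e => e.1)
        = (List.range p).map (fun t => σ^[t] c) := by
      rw [List.map_map]; rfl
    rw [hmap]
    exact (List.nodup_range : (List.range p).Nodup).map_on
      (fun s hs t ht hst => hinj s t (List.mem_range.mp hs) (List.mem_range.mp ht) hst)
  · have hmap : ((List.range p).map f).map (fun e => e.2.1)
        = (List.range p).map (fun t => w (σ^[t+1] c) * w (σ^[t] c)) := by
      rw [List.map_map]; rfl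
    rw [hmap, List.prod_map_mul]
    set P : ℤ := ((List.range p).map fun t => w (σ^[t] c)).prod with hP
    have hshift : ((List.range p).map fun t => w (σ^[t+1] c)).prod = P := by
      have e1 : ((List.range (p+1)).map fun t => w (σ^[t] c)).prod
          = w c * ((List.range p).map fun t => w (σ^[t+1] c)).prod := by
        rw [List.range_succ_eq_map]
        simp [List.map_map, Function.comp_def]
      have e2 : ((List.range (p+1)).map fun t => w (σ^[t] c)).prod = P * w c := by
        rw [List.range_succ, List.map_append, List.prod_append]
        simp [hper, hP]
      have hc0 : w c ≠ 0 := by rcases hw c with h | h <;> rw [h] <;> norm_num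
      have : w c * ((List.range p).map fun t => w (σ^[t+1] c)).prod = w c * P := by
        rw [← e1, e2, mul_comm]
      exact mul_left_cancel₀ hc0 this
    rw [hshift]
    have hPpm : P = 1 ∨ P = -1 := by
      apply prod_pm
      intro x hx
      rw [List.mem_map] at hx
      obtain ⟨t, _, rfl⟩ := hx
      exact hw _
    rcases hPpm with h | h <;> rw [h] <;> norm_num

private lemma key_s3 {n : ℕ} (a b : Fin n → ℤ) (hab : ∀ i, a i + 1 ≤ b i)
    (F : (Fin n → ℤ) → Fin n → ℤ)
    (h : ∀ x v, InX' a b x v → ¬ HasPosCircuit (localGraphT F x v))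
    (y : Fin n → ℤ) (hy : y ∈ StateSpace a b) :
    ∀ N z, rdist z y ≤ N → z ∈ StateSpace a b → z ≠ y →
      (∀ i, z i ≠ y i → (y i - z i).sign * (F z i - z i) ≤ 0) →
      (∀ i, z i ≠ y i → 0 ≤ (y i - z i).sign * (F y i - y i)) →
      False := by
  intro N
  induction N with
  | zero =>
    intro z hdz _ hne _ _
    exact hne (rdist_eq_zero (Nat.le_zero.mp hdz))
  | succ N ih =>
    intro z hdz hzX hne Hz Hy
    classical
    by_cases hgood : ∀ j, z j ≠ y j → ∃ i, z i ≠ y i ∧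
        1 ≤ (y i - z i).sign * (F (Function.update z j (z j + (y j - z j).sign)) i - z i)
    · -- all coordinates good: build a positive circuit, contradiction with h
      obtain ⟨j₀, hj₀⟩ := Function.ne_iff.mp hne
      set w : Fin n → ℤ :=
        fun i => if z i ≠ y i then (y i - z i).sign else if z i < b i then 1 else -1 with hwdef
      have hwI : ∀ i, z i ≠ y i → w i = (y i - z i).sign := by
        intro i hi; rw [hwdef]; simp only [if_pos hi]
      have hw : ∀ i, w i = 1 ∨ w i = -1 := by
        intro i
        by_cases hi : z i ≠ y i
        · rw [hwI i hi]; exact sign_cases (sub_ne_zero.mpr (Ne.symm hi))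
        · rw [hwdef]; simp only [if_neg hi]; split <;> simp
      set σ : Fin n → Fin n :=
        fun j => if hj : z j ≠ y j then (hgood j hj).choose else j with hσdef
      have hσS : ∀ x (hx : z x ≠ y x), z (σ x) ≠ y (σ x) ∧
          1 ≤ (y (σ x) - z (σ x)).sign *
            (F (Function.update z x (z x + (y x - z x).sign)) (σ x) - z (σ x)) := by
        intro x hx
        have : σ x = (hgood x hx).choose := by rw [hσdef]; exact dif_pos hx
        rw [this]
        exact (hgood x hx).choose_spec
      obtain ⟨c, p, hp, hcS, hper, hinj⟩ :=
        exists_cycle_s3 σ {i | z i ≠ y i} (fun x hx => (hσS x hx).1) j₀ hj₀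
      have hiterS : ∀ t, z (σ^[t] c) ≠ y (σ^[t] c) := by
        intro t; induction t with
        | zero => simpa using hcS
        | succ t iht => rw [Function.iterate_succ_apply']; exact (hσS _ iht).1
      have hedge : ∀ t : ℕ,
          ((σ^[t] c, w (σ^[t+1] c) * w (σ^[t] c), σ^[t+1] c) : SEdge n)
            ∈ localGraphT F z w := by
        intro t
        have hu := hiterS t
        have hnext : σ^[t+1] c = σ (σ^[t] c) := Function.iterate_succ_apply' σ t c
        rw [hnext]
        exact edge_mem_localGraphT F z y w (σ (σ^[t] c)) (σ^[t] c)
          (hwI _ hu) (hwI _ (hσS _ hu).1) hu (hσS _ hu).1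
          (Hz _ (hσS _ hu).1) (hσS _ hu).2
      have hInX' : InX' a b z w := by
        refine ⟨hzX, hw, ?_⟩
        intro i
        have hzb := hzX i
        have hyb := hy i
        have habi := hab i
        have : (z + w) i = z i + w i := rfl
        rw [this]
        by_cases hi : z i ≠ y i
        · rw [hwI i hi]
          rcases (sub_ne_zero.mpr (Ne.symm hi)).lt_or_gt with hlt | hlt
          · rw [Int.sign_eq_neg_one_iff_neg.mpr hlt]; omega
          · rw [Int.sign_eq_one_iff_pos.mpr hlt]; omega
        · rw [hwdef]; simp only [if_neg hi]
          split <;> rename_i hsplit <;> omega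
      exact h z w hInX' (hasPosCircuit_of_cycle _ w hw σ c p hp hper hinj hedge)
    · push_neg at hgood
      obtain ⟨j, hj, hbad⟩ := hgood
      have hbad' : ∀ i, z i ≠ y i →
          (y i - z i).sign * (F (Function.update z j (z j + (y j - z j).sign)) i - z i) ≤ 0 := by
        intro i hi; have := hbad i hi; omega
      set z' := Function.update z j (z j + (y j - z j).sign) with hz'def
      have hjne : y j - z j ≠ 0 := sub_ne_zero.mpr (Ne.symm hj)
      have hz'j : z' j = z j + (y j - z j).sign := by
        rw [hz'def, Function.update_self]
      have hz'i : ∀ i, i ≠ j → z' i = z i := fun i hij => Function.update_of_ne hij _ _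
      by_cases hz'y : z' = y
      · -- reached y: contradiction with Hy
        have h1 := hbad' j hj
        rw [hz'y] at h1
        have h2 := Hy j hj
        have h3 : y j = z j + (y j - z j).sign := by
          have h4 := hz'j; rwa [hz'y] at h4
        rcases hjne.lt_or_gt with hlt | hlt
        · rw [Int.sign_eq_neg_one_iff_neg.mpr hlt] at h1 h2 h3; linarith
        · rw [Int.sign_eq_one_iff_pos.mpr hlt] at h1 h2 h3; linarith
      · -- recurse
        have hd : rdist z' y + 1 = rdist z y := rdist_update hj
        -- sign stability at j
        have hsignj : z' j ≠ y j → (y j - z' j).sign = (y j - z j).sign := by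
          intro hne'
          rcases hjne.lt_or_gt with hlt | hlt
          · have hs := Int.sign_eq_neg_one_iff_neg.mpr hlt
            rw [hs] at hz'j
            have : y j - z' j < 0 := by
              have := sub_ne_zero.mpr (Ne.symm hne'); omega
            rw [hs, Int.sign_eq_neg_one_iff_neg.mpr this]
          · have hs := Int.sign_eq_one_iff_pos.mpr hlt
            rw [hs] at hz'j
            have : 0 < y j - z' j := by
              have := sub_ne_zero.mpr (Ne.symm hne'); omega
            rw [hs, Int.sign_eq_one_iff_pos.mpr this]
        apply ih z' (by omega) ?_ hz'y ?_ ?_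
        · -- z' ∈ StateSpace
          intro i
          have hzb := hzX i
          have hyb := hy i
          by_cases hij : i = j
          · subst hij
            rw [hz'j]
            rcases hjne.lt_or_gt with hlt | hlt
            · rw [Int.sign_eq_neg_one_iff_neg.mpr hlt]; omega
            · rw [Int.sign_eq_one_iff_pos.mpr hlt]; omega
          · rw [hz'i i hij]; exact hzb
        · -- Hz for z'
          intro i hi
          rcases eq_or_ne i j with rfl | hij
          · rw [hsignj hi, hz'j]
            have hb := hbad' i hj
            rcases hjne.lt_or_gt with hlt | hlt
            · rw [Int.sign_eq_neg_one_iff_neg.mpr hlt] at hb ⊢; linarith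
            · rw [Int.sign_eq_one_iff_pos.mpr hlt] at hb ⊢; linarith
          · rw [hz'i i hij] at hi ⊢
            exact hbad' i hi
        · -- Hy for z'
          intro i hi
          rcases eq_or_ne i j with rfl | hij
          · rw [hsignj hi]
            exact Hy i hj
          · rw [hz'i i hij] at hi ⊢
            exact Hy i hi

/-- If no local interaction graph with thresholds `G_F(x,v)` has a positive
circuit, then `Γ(F)` has exactly one attractor. -/
theorem stmt3 {n : ℕ} (a b : Fin n → ℤ) (hab : ∀ i, a i + 1 ≤ b i)
    (F : (Fin n → ℤ) → Fin n → ℤ)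
    (hF : ∀ x ∈ StateSpace a b, F x ∈ StateSpace a b)
    (h : ∀ x v, InX' a b x v → ¬ HasPosCircuit (localGraphT F x v)) :
    ∃! A, IsAttractor a b F A := by
  classical
  -- finiteness of the state space
  have hXfin : (StateSpace a b).Finite := by
    have hsub : StateSpace a b ⊆ Set.pi Set.univ (fun i => Set.Icc (a i) (b i)) := by
      intro x hx i _; exact ⟨(hx i).1, (hx i).2⟩
    exact (Set.Finite.pi fun i => Set.finite_Icc _ _).subset hsub
  have hXne : a ∈ StateSpace a b := fun i => ⟨le_refl _, by linarith [hab i]⟩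
  -- the state space is a trap domain
  have hXtrap : IsTrapDomain a b F (StateSpace a b) := by
    refine ⟨⟨a, hXne⟩, subset_rfl, ?_⟩
    rintro x hx y ⟨i, hFi, rfl⟩
    intro k
    obtain ⟨h1a, h1b⟩ := hx k
    obtain ⟨h2a, h2b⟩ := hF x hx k
    by_cases hk : k = i
    · subst hk
      rw [Function.update_self]
      rcases (sub_ne_zero.mpr hFi).lt_or_gt with hlt | hlt
      · rw [Int.sign_eq_neg_one_iff_neg.mpr hlt]; omega
      · rw [Int.sign_eq_one_iff_pos.mpr hlt]; omega
    · rw [Function.update_of_ne hk]; exact hx k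
  -- existence of an attractor
  have hex : ∃ A, IsAttractor a b F A := by
    set S := {k : ℕ | ∃ A, IsTrapDomain a b F A ∧ A.ncard = k} with hS
    have hSne : S.Nonempty := ⟨_, StateSpace a b, hXtrap, rfl⟩
    obtain ⟨A, hA, hcard⟩ := Nat.sInf_mem hSne
    refine ⟨A, hA, ?_⟩
    intro B hB hBA
    have hAfin : A.Finite := hXfin.subset hA.2.1
    refine Set.eq_of_subset_of_ncard_le hBA ?_ hAfin
    rw [hcard]
    exact Nat.sInf_le ⟨B, hB, rfl⟩
  -- any two attractors are equal
  have huniq : ∀ A B, IsAttractor a b F A → IsAttractor a b F B → A = B := by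
    intro A B hA hB
    by_cases hint : (A ∩ B).Nonempty
    · have htrap : IsTrapDomain a b F (A ∩ B) :=
        ⟨hint, Set.inter_subset_left.trans hA.1.2.1,
          fun x hx y hxy => ⟨hA.1.2.2 x hx.1 y hxy, hB.1.2.2 x hx.2 y hxy⟩⟩
      have e1 := hA.2 _ htrap Set.inter_subset_left
      have e2 := hB.2 _ htrap Set.inter_subset_right
      exact e1.symm.trans e2
    · exfalso
      set T := {k : ℕ | ∃ x ∈ A, ∃ y ∈ B, rdist x y = k} with hT
      obtain ⟨x₀, hx₀⟩ := hA.1.1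
      obtain ⟨y₀, hy₀⟩ := hB.1.1
      have hTne : T.Nonempty := ⟨_, x₀, hx₀, y₀, hy₀, rfl⟩
      obtain ⟨x, hxA, y, hyB, hdxy⟩ := Nat.sInf_mem hTne
      have hxy : x ≠ y := by
        rintro rfl
        exact hint ⟨x, hxA, hyB⟩
      have hd0 : rdist x y ≠ 0 := fun h0 => hxy (rdist_eq_zero h0)
      have hxX : x ∈ StateSpace a b := hA.1.2.1 hxA
      have hyX : y ∈ StateSpace a b := hB.1.2.1 hyB
      have Hz : ∀ i, x i ≠ y i → (y i - x i).sign * (F x i - x i) ≤ 0 := by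
        intro i hi
        by_contra hpos
        push_neg at hpos
        have h1 : 1 ≤ (y i - x i).sign * (F x i - x i) := hpos
        have hs := sign_cases (sub_ne_zero.mpr (Ne.symm hi))
        have hFne : F x i ≠ x i := by
          intro heq
          rw [heq, sub_self, mul_zero] at h1
          exact absurd h1 (by norm_num)
        have hsgn : (F x i - x i).sign = (y i - x i).sign := sign_eq_of_one_le hs h1
        have hstep : Async F x (Function.update x i (x i + (F x i - x i).sign)) :=
          ⟨i, hFne, rfl⟩
        have hx' : Function.update x i (x i + (F x i - x i).sign) ∈ A :=
          hA.1.2.2 x hxA _ hstep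
        rw [hsgn] at hx'
        have hdd : rdist (Function.update x i (x i + (y i - x i).sign)) y + 1 = rdist x y :=
          rdist_update hi
        have hle : sInf T ≤ rdist (Function.update x i (x i + (y i - x i).sign)) y :=
          Nat.sInf_le ⟨_, hx', y, hyB, rfl⟩
        omega
      have Hy : ∀ i, x i ≠ y i → 0 ≤ (y i - x i).sign * (F y i - y i) := by
        intro i hi
        by_contra hneg
        push_neg at hneg
        have h1 : (y i - x i).sign * (F y i - y i) ≤ -1 := by omega
        have hs := sign_cases (sub_ne_zero.mpr (Ne.symm hi))
        have hs' : -(y i - x i).sign = 1 ∨ -(y i - x i).sign = -1 := by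
          rcases hs with hs | hs <;> rw [hs] <;> simp
        have h2 : 1 ≤ (-(y i - x i).sign) * (F y i - y i) := by linarith
        have hFne : F y i ≠ y i := by
          intro heq
          rw [heq, sub_self, mul_zero] at h2
          exact absurd h2 (by norm_num)
        have hsgn : (F y i - y i).sign = -(y i - x i).sign := sign_eq_of_one_le hs' h2
        have hstep : Async F y (Function.update y i (y i + (F y i - y i).sign)) :=
          ⟨i, hFne, rfl⟩
        have hy' : Function.update y i (y i + (F y i - y i).sign) ∈ B :=
          hB.1.2.2 y hyB _ hstep
        have hsx : (x i - y i).sign = -(y i - x i).sign := by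
          rw [← Int.sign_neg, neg_sub]
        rw [hsgn, ← hsx] at hy'
        have hdd : rdist (Function.update y i (y i + (x i - y i).sign)) x + 1 = rdist y x :=
          rdist_update (Ne.symm hi)
        have hle : sInf T ≤ rdist x (Function.update y i (y i + (x i - y i).sign)) :=
          Nat.sInf_le ⟨x, hxA, _, hy', rfl⟩
        rw [rdist_comm x (Function.update y i (y i + (x i - y i).sign))] at hle
        rw [rdist_comm y x] at hdd
        omega
      exact key_s3 a b hab F h y hyX (rdist x y) x le_rfl hxX hxy Hz Hy
  obtain ⟨A, hA⟩ := hex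
  exact ⟨A, hA, fun B hB => huniq B A hB hA⟩
end

section
/- Let X = ∏_{i=1}^n X_i be a product of n finite intervals of integers, each of cardinality at least 2, and let F be a map from X to itself. For each i ∈ {1,…,n}, let T_i(G_F) be the set of real numbers t for which there exists (x,v) ∈ X' such that t = x_i + v_i/2 and vertex i belongs to some positive circuit of G_F(x,v). If I ⊆ {1,…,n} is such that for every (x,v) ∈ X' every positive circuit of G_F(x,v) has at least one vertex in I, then the number of attractors of the asynchronous state transition graph Γ(F) is at most ∏_{i∈I} (|T_i(G_F)| + 1). -/
namespace Stmt4

open Function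

variable {n : ℕ}

/-- measure of a box -/
def boxM (a b : Fin n → ℤ) : ℕ := ∑ i, (b i - a i).toNat

/-- clamp a point into the box `[a,b]` -/
def clampTo (a b : Fin n → ℤ) (w : Fin n → ℤ) : Fin n → ℤ :=
  fun i => max (a i) (min (b i) (w i))

/-- coordinate `k` is admissible for `(x,v)` in the box `[a,b]` -/
def Adm (a b x v : Fin n → ℤ) (k : Fin n) : Prop :=
  x ∈ StateSpace a b ∧ (v k = 1 ∨ v k = -1) ∧ a k ≤ x k + v k ∧ x k + v k ≤ b k

/-- the per-coordinate-admissible local interaction graph with thresholds -/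
def EG (a b : Fin n → ℤ) (F : (Fin n → ℤ) → Fin n → ℤ) (x v : Fin n → ℤ) :
    Set (SEdge n) :=
  {e | Adm a b x v e.1 ∧ Adm a b x v e.2.2 ∧
    ((e.2.1 = 1 ∧ 0 < jac F x v e.2.2 e.1) ∨ (e.2.1 = -1 ∧ jac F x v e.2.2 e.1 < 0)) ∧
    BothSides ((F x e.2.2 : ℚ)) ((F (Function.update x e.1 (x e.1 + v e.1)) e.2.2 : ℚ))
      ((x e.2.2 : ℚ) + (v e.2.2 : ℚ) / 2)}

/-- generalized threshold sets -/
def genT (a b : Fin n → ℤ) (F : (Fin n → ℤ) → Fin n → ℤ) (i : Fin n) : Set ℝ :=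
  {t | ∃ x v, t = (x i : ℝ) + (v i : ℝ) / 2 ∧ MemPosCircuit (EG a b F x v) i}

lemma zdiv (d v : ℤ) (h : v = 1 ∨ v = -1) : d / v = d * v := by
  rcases h with h | h <;> simp [h]

lemma stateSpace_finite (a b : Fin n → ℤ) : (StateSpace a b).Finite := by
  have : StateSpace a b ⊆ Set.pi Set.univ (fun i => Set.Icc (a i) (b i)) := by
    intro x hx i _
    exact ⟨(hx i).1, (hx i).2⟩
  exact (Set.Finite.pi (fun i => Set.finite_Icc _ _)).subset this

lemma clampTo_mem {a b : Fin n → ℤ} (hab : ∀ i, a i ≤ b i) (w : Fin n → ℤ) :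
    clampTo a b w ∈ StateSpace a b := by
  intro i
  exact ⟨le_max_left _ _, max_le (hab i) (min_le_left _ _)⟩

lemma clampTo_id {a b : Fin n → ℤ} {w : Fin n → ℤ} (hw : w ∈ StateSpace a b) :
    clampTo a b w = w := by
  funext i
  have h := hw i
  simp [clampTo, min_eq_right h.2, max_eq_right h.1]

lemma clampTo_lt {a b w w' : Fin n → ℤ} {i : Fin n}
    (h : clampTo a b w i < clampTo a b w' i) : w i < w' i := by
  by_contra hc
  push_neg at hc
  exact absurd (max_le_max le_rfl (min_le_min le_rfl hc)) (not_le.mpr h)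

end Stmt4

namespace Stmt4

variable {n : ℕ} {a b : Fin n → ℤ} {F : (Fin n → ℤ) → Fin n → ℤ}

lemma attractor_eq_of_inter {A B : Set (Fin n → ℤ)}
    (hA : IsAttractor a b F A) (hB : IsAttractor a b F B)
    (h : (A ∩ B).Nonempty) : A = B := by
  have hT : IsTrapDomain a b F (A ∩ B) :=
    ⟨h, Set.inter_subset_left.trans hA.1.2.1,
     fun x hx y hy => ⟨hA.1.2.2 x hx.1 y hy, hB.1.2.2 x hx.2 y hy⟩⟩
  exact (hA.2 _ hT Set.inter_subset_left).symm.trans (hB.2 _ hT Set.inter_subset_right)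

lemma attractors_finite (a b : Fin n → ℤ) (F : (Fin n → ℤ) → Fin n → ℤ) :
    {A | IsAttractor a b F A}.Finite := by
  have h1 : {A | IsAttractor a b F A} ⊆ {A | A ⊆ StateSpace a b} :=
    fun A hA => hA.1.2.1
  exact (Set.Finite.finite_subsets (stateSpace_finite a b)).subset h1

lemma trap_contains_attractor {A : Set (Fin n → ℤ)} (hA : IsTrapDomain a b F A) :
    ∃ B ⊆ A, IsAttractor a b F B := by
  classical
  set N : Set ℕ := {k | ∃ B, IsTrapDomain a b F B ∧ B ⊆ A ∧ B.ncard = k} with hN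
  have hNne : N.Nonempty := ⟨A.ncard, A, hA, le_refl _, rfl⟩
  obtain ⟨B, hB, hBA, hBcard⟩ := Nat.sInf_mem hNne
  refine ⟨B, hBA, hB, fun C hC hCB => ?_⟩
  have hCfin : C.Finite := (stateSpace_finite a b).subset hC.2.1
  have hBfin : B.Finite := (stateSpace_finite a b).subset hB.2.1
  have hle : sInf N ≤ C.ncard := Nat.sInf_le ⟨C, hC, hCB.trans hBA, rfl⟩
  exact Set.eq_of_subset_of_ncard_le hCB (hBcard ▸ hle) hBfin

lemma singleton_attractor {x : Fin n → ℤ} (hx : x ∈ StateSpace a b)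
    (hfix : F x = x) : IsAttractor a b F {x} := by
  constructor
  · refine ⟨Set.singleton_nonempty x, Set.singleton_subset_iff.mpr hx, ?_⟩
    rintro z rfl y ⟨i, hi, _⟩
    exact absurd (congrFun hfix i) hi
  · intro B hB hBx
    exact (Set.Nonempty.subset_singleton_iff hB.1).mp hBx

lemma two_attractors_contra {x y : Fin n → ℤ} (hx : x ∈ StateSpace a b)
    (hy : y ∈ StateSpace a b) (hfx : F x = x) (hfy : F y = y) (hxy : x ≠ y)
    (hle : {A | IsAttractor a b F A}.ncard ≤ 1) : False := by
  have h1 : ({x} : Set (Fin n → ℤ)) ∈ {A | IsAttractor a b F A} :=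
    singleton_attractor hx hfx
  have h2 : ({y} : Set (Fin n → ℤ)) ∈ {A | IsAttractor a b F A} :=
    singleton_attractor hy hfy
  have hne : ({x} : Set (Fin n → ℤ)) ≠ {y} := by
    simp [Set.singleton_eq_singleton_iff, hxy]
  have : 1 < {A | IsAttractor a b F A}.ncard :=
    (Set.one_lt_ncard (attractors_finite a b F)).mpr ⟨_, h1, _, h2, hne⟩
  omega

end Stmt4

namespace Stmt4

variable {n : ℕ}

lemma jac_clamp_sign {a' b' : Fin n → ℤ} {F : (Fin n → ℤ) → Fin n → ℤ}
    {x v : Fin n → ℤ} {i j : Fin n} (hv : v j = 1 ∨ v j = -1) :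
    (0 < jac (fun z => clampTo a' b' (F z)) x v i j → 0 < jac F x v i j) ∧
    (jac (fun z => clampTo a' b' (F z)) x v i j < 0 → jac F x v i j < 0) := by
  unfold jac
  rw [zdiv _ _ hv, zdiv _ _ hv]
  rcases hv with h | h <;> rw [h] <;> constructor <;> intro hlt
  · simp only [mul_one] at hlt ⊢
    exact sub_pos.mpr (clampTo_lt (sub_pos.mp hlt))
  · simp only [mul_one] at hlt ⊢
    exact sub_neg.mpr (clampTo_lt (sub_neg.mp hlt))
  · simp only [mul_neg_one, neg_pos] at hlt ⊢
    exact sub_neg.mpr (clampTo_lt (sub_neg.mp hlt))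
  · simp only [mul_neg_one, neg_neg, neg_lt, Left.neg_neg_iff] at hlt ⊢
    exact sub_pos.mpr (clampTo_lt (sub_pos.mp hlt))

lemma bothSides_clamp {A B p q : ℤ} {t : ℚ}
    (hl : (A : ℚ) < t) (hu : t < (B : ℚ))
    (h : BothSides ((max A (min B p) : ℤ) : ℚ) ((max A (min B q) : ℤ) : ℚ) t) :
    BothSides (p : ℚ) (q : ℚ) t := by
  have key1 : ∀ r : ℤ, ((max A (min B r) : ℤ) : ℚ) < t → (r : ℚ) < t := by
    intro r hr
    push_cast at hr
    by_contra hc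
    push_neg at hc
    exact absurd (le_max_of_le_right (le_min (le_of_lt hu) hc)) (not_le.mpr hr)
  have key2 : ∀ r : ℤ, t < ((max A (min B r) : ℤ) : ℚ) → t < (r : ℚ) := by
    intro r hr
    push_cast at hr
    by_contra hc
    push_neg at hc
    exact absurd (max_le (le_of_lt hl) (le_trans (min_le_right _ _) hc)) (not_le.mpr hr)
  rcases h with ⟨h1, h2⟩ | ⟨h1, h2⟩
  · exact Or.inl ⟨key1 _ h1, key2 _ h2⟩
  · exact Or.inr ⟨key1 _ h1, key2 _ h2⟩

lemma adm_mono {a b a' b' x v : Fin n → ℤ} (haa' : ∀ i, a i ≤ a' i)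
    (hb'b : ∀ i, b' i ≤ b i) {k : Fin n} (h : Adm a' b' x v k) : Adm a b x v k :=
  ⟨fun i => ⟨(haa' i).trans (h.1 i).1, (h.1 i).2.trans (hb'b i)⟩, h.2.1,
   (haa' k).trans h.2.2.1, h.2.2.2.trans (hb'b k)⟩

lemma EG_clamp_subset {a b a' b' : Fin n → ℤ} (haa' : ∀ i, a i ≤ a' i)
    (hb'b : ∀ i, b' i ≤ b i) (F : (Fin n → ℤ) → Fin n → ℤ) (x v : Fin n → ℤ) :
    EG a' b' (fun z => clampTo a' b' (F z)) x v ⊆ EG a b F x v := by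
  rintro ⟨j, s, i⟩ ⟨hAj, hAi, hsgn, hbs⟩
  refine ⟨adm_mono haa' hb'b hAj, adm_mono haa' hb'b hAi, ?_, ?_⟩
  · rcases hsgn with ⟨hs, hj⟩ | ⟨hs, hj⟩
    · exact Or.inl ⟨hs, (jac_clamp_sign hAj.2.1).1 hj⟩
    · exact Or.inr ⟨hs, (jac_clamp_sign hAj.2.1).2 hj⟩
  · have h1 : (a' i : ℚ) ≤ (x i : ℚ) := by exact_mod_cast (hAi.1 i).1
    have h2 : (x i : ℚ) ≤ (b' i : ℚ) := by exact_mod_cast (hAi.1 i).2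
    have h3 : (a' i : ℚ) ≤ (x i : ℚ) + (v i : ℚ) := by exact_mod_cast hAi.2.2.1
    have h4 : (x i : ℚ) + (v i : ℚ) ≤ (b' i : ℚ) := by exact_mod_cast hAi.2.2.2
    have hl : (a' i : ℚ) < (x i : ℚ) + (v i : ℚ) / 2 := by
      rcases hAi.2.1 with h | h <;> rw [h] at h3 h4 ⊢ <;> push_cast at h3 h4 ⊢ <;> linarith
    have hu : (x i : ℚ) + (v i : ℚ) / 2 < (b' i : ℚ) := by
      rcases hAi.2.1 with h | h <;> rw [h] at h3 h4 ⊢ <;> push_cast at h3 h4 ⊢ <;> linarith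
    exact bothSides_clamp hl hu hbs

lemma posCircuit_mono {E E' : Set (SEdge n)} (h : E ⊆ E') {c : List (SEdge n)}
    (hc : IsPosCircuit E c) : IsPosCircuit E' c :=
  ⟨⟨hc.1.1, fun e he => h (hc.1.2.1 e he), hc.1.2.2.1, hc.1.2.2.2.1, hc.1.2.2.2.2⟩, hc.2⟩

lemma memPosCircuit_mono {E E' : Set (SEdge n)} (h : E ⊆ E') {i : Fin n}
    (hc : MemPosCircuit E i) : MemPosCircuit E' i := by
  obtain ⟨c, hc, hi⟩ := hc
  exact ⟨c, posCircuit_mono h hc, hi⟩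

lemma memPosCircuit_adm {a b x v : Fin n → ℤ} {F : (Fin n → ℤ) → Fin n → ℤ} {i : Fin n}
    (h : MemPosCircuit (EG a b F x v) i) : Adm a b x v i := by
  obtain ⟨c, hc, hi⟩ := h
  obtain ⟨e, he, rfl⟩ := List.mem_map.mp hi
  exact (hc.1.2.1 e he).1

lemma genT_clamp_subset {a b a' b' : Fin n → ℤ} (haa' : ∀ i, a i ≤ a' i)
    (hb'b : ∀ i, b' i ≤ b i) (F : (Fin n → ℤ) → Fin n → ℤ) (i : Fin n) :
    genT a' b' (fun z => clampTo a' b' (F z)) i ⊆ genT a b F i := by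
  rintro t ⟨x, v, ht, hmp⟩
  exact ⟨x, v, ht, memPosCircuit_mono (EG_clamp_subset haa' hb'b F x v) hmp⟩

lemma genT_finite (a b : Fin n → ℤ) (F : (Fin n → ℤ) → Fin n → ℤ) (i : Fin n) :
    (genT a b F i).Finite := by
  have hsub : genT a b F i ⊆ (fun k : ℤ => (k : ℝ) / 2) '' Set.Icc (2 * a i - 1) (2 * b i + 1) := by
    rintro t ⟨x, v, ht, hmp⟩
    have hadm := memPosCircuit_adm hmp
    refine ⟨2 * x i + v i, ?_, ?_⟩
    · have h1 := (hadm.1 i).1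
      have h2 := (hadm.1 i).2
      rcases hadm.2.1 with h | h <;> rw [h] <;> constructor <;> omega
    · rw [ht]
      push_cast
      ring
  exact ((Set.finite_Icc _ _).image _).subset hsub

end Stmt4

namespace Stmt4

variable {n : ℕ}

lemma loop_posCircuit {E : Set (SEdge n)} {k : Fin n} (h : (k, (1:ℤ), k) ∈ E) :
    IsPosCircuit E [(k, (1:ℤ), k)] := by
  refine ⟨⟨by simp, ?_, ?_, by simp, by simp⟩, by simp⟩
  · intro e he
    rw [List.mem_singleton] at he
    exact he ▸ h
  · intro k' h'
    simp at h'

lemma prod_adjacent_pos (h : ℕ → ℤ) (hpm : ∀ t, h t = 1 ∨ h t = -1) (P : ℕ)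
    (hP : h P = h 0) : 0 < ((List.range P).map (fun t => h t * h (t + 1))).prod := by
  have key : ∀ Q, ((List.range Q).map (fun t => h t * h (t + 1))).prod = h 0 * h Q := by
    intro Q
    induction Q with
    | zero =>
      simp only [List.range_zero, List.map_nil, List.prod_nil]
      rcases hpm 0 with h0 | h0 <;> rw [h0] <;> norm_num
    | succ Q ih =>
      rw [List.range_succ, List.map_append, List.prod_append, ih]
      simp only [List.map_cons, List.map_nil, List.prod_cons, List.prod_nil]
      rcases hpm Q with hQ | hQ <;> rw [hQ] <;> ring
  rw [key P, hP]
  rcases hpm 0 with h0 | h0 <;> rw [h0] <;> norm_num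

lemma exists_periodic (f : Fin n → Fin n) (D : Finset (Fin n)) (hf : ∀ k ∈ D, f k ∈ D)
    (k₀ : Fin n) (hk₀ : k₀ ∈ D) :
    ∃ (z : Fin n) (P : ℕ), z ∈ D ∧ 0 < P ∧ f^[P] z = z ∧
      (∀ s t, s < t → t < P → f^[s] z ≠ f^[t] z) := by
  have horb : ∀ t, f^[t] k₀ ∈ D := by
    intro t
    induction t with
    | zero => simpa
    | succ t ih => rw [Function.iterate_succ_apply']; exact hf _ ih
  have hninj : ¬ Function.Injective (fun t : Fin (n + 1) => f^[(t : ℕ)] k₀) := by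
    intro hinj
    have := Fintype.card_le_of_injective _ hinj
    simp only [Fintype.card_fin] at this
    omega
  rw [Function.not_injective_iff] at hninj
  obtain ⟨s, t, heq, hne⟩ := hninj
  -- wlog s < t
  have main : ∀ (s t : ℕ), s < t → f^[s] k₀ = f^[t] k₀ →
      ∃ (z : Fin n) (P : ℕ), z ∈ D ∧ 0 < P ∧ f^[P] z = z ∧
        (∀ s' t', s' < t' → t' < P → f^[s'] z ≠ f^[t'] z) := by
    intro s t hst heq
    set z := f^[s] k₀ with hz
    have hper0 : f^[t - s] z = z := by
      rw [hz, ← Function.iterate_add_apply]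
      have : t - s + s = t := by omega
      rw [this, ← heq]
    set Pset : Set ℕ := {P | 0 < P ∧ f^[P] z = z} with hPset
    have hne' : Pset.Nonempty := ⟨t - s, by omega, hper0⟩
    obtain ⟨hPpos, hPfix⟩ := Nat.sInf_mem hne'
    refine ⟨z, sInf Pset, horb s, hPpos, hPfix, ?_⟩
    intro s' t' hs't' ht' hcon
    have : f^[sInf Pset - t' + s'] z = z := by
      rw [Function.iterate_add_apply, hcon, ← Function.iterate_add_apply]
      have : sInf Pset - t' + t' = sInf Pset := by omega
      rw [this, hPfix]
    have hle := Nat.sInf_le (show sInf Pset - t' + s' ∈ Pset from ⟨by omega, this⟩)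
    omega
  rcases lt_or_gt_of_ne (fun h : (s : ℕ) = (t : ℕ) => hne (Fin.ext h)) with hlt | hgt
  · exact main s t hlt heq
  · exact main t s hgt heq.symm

end Stmt4

namespace Stmt4

variable {n : ℕ}

lemma cycle_posCircuit {E : Set (SEdge n)} (D : Finset (Fin n)) (f : Fin n → Fin n)
    (hf : ∀ k ∈ D, f k ∈ D) (u : Fin n → ℤ) (hu : ∀ k, u k = 1 ∨ u k = -1)
    (hE : ∀ k ∈ D, (k, u k * u (f k), f k) ∈ E) (k₀ : Fin n) (hk₀ : k₀ ∈ D) :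
    ∃ c, IsPosCircuit E c := by
  obtain ⟨z, P, hzD, hP, hfix, hinj⟩ := exists_periodic f D hf k₀ hk₀
  set g : ℕ → Fin n := fun t => f^[t] z with hg
  have hgD : ∀ t, g t ∈ D := by
    intro t
    induction t with
    | zero => simpa [hg]
    | succ t ih =>
      show f^[t+1] z ∈ D
      rw [Function.iterate_succ_apply']
      exact hf _ ih
  have hgsucc : ∀ t, g (t + 1) = f (g t) := fun t => Function.iterate_succ_apply' f t z
  have hgP : g P = g 0 := by simp [hg, hfix]
  refine ⟨(List.range P).map (fun t => (g t, u (g t) * u (g (t + 1)), g (t + 1))), ?_, ?_⟩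
  · refine ⟨?_, ?_, ?_, ?_, ?_⟩
    · simp only [ne_eq, List.map_eq_nil_iff, List.range_eq_nil]
      omega
    · intro e he
      obtain ⟨t, _, rfl⟩ := List.mem_map.mp he
      rw [hgsucc t]
      exact hE (g t) (hgD t)
    · intro k hk
      simp only [List.length_map, List.length_range] at hk
      simp [List.get_eq_getElem]
    · rw [List.getLast?_eq_getElem?, List.head?_eq_getElem?]
      have hlen : ((List.range P).map (fun t => (g t, u (g t) * u (g (t + 1)), g (t + 1)))).length = P := by
        simp
      rw [hlen]
      have h1 : P - 1 < P := by omega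
      rw [List.getElem?_eq_getElem (by simpa using h1), List.getElem?_eq_getElem (by simpa using hP)]
      simp only [List.getElem_map, List.getElem_range, Option.map_some]
      have : P - 1 + 1 = P := by omega
      rw [this, hgP]
    · have : ((List.range P).map (fun t => (g t, u (g t) * u (g (t + 1)), g (t + 1)))).map
          (fun e => e.1) = (List.range P).map g := by
        rw [List.map_map]; rfl
      rw [this]
      refine List.Nodup.map_on ?_ List.nodup_range
      intro s hs t ht hst
      simp only [List.mem_range] at hs ht
      by_contra hne
      rcases lt_or_gt_of_ne hne with h | h
      · exact hinj s t h ht hst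
      · exact hinj t s h hs hst.symm
  · have : ((List.range P).map (fun t => (g t, u (g t) * u (g (t + 1)), g (t + 1)))).map
        (fun e => e.2.1) = (List.range P).map (fun t => u (g t) * u (g (t + 1))) := by
      rw [List.map_map]; rfl
    rw [this]
    exact prod_adjacent_pos (fun t => u (g t)) (fun t => hu (g t)) P (by show u (g P) = u (g 0); rw [hgP])

end Stmt4

namespace Stmt4

variable {n : ℕ}

lemma async_of_clamp_async {a' b' : Fin n → ℤ} {F : (Fin n → ℤ) → Fin n → ℤ}
    {x y : Fin n → ℤ} (hx : x ∈ StateSpace a' b')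
    (h : Async (fun z => clampTo a' b' (F z)) x y) :
    Async F x y ∧ y ∈ StateSpace a' b' := by
  obtain ⟨i, hne, hy⟩ := h
  have hxi1 : a' i ≤ x i := (hx i).1
  have hxi2 : x i ≤ b' i := (hx i).2
  set m' : ℤ := min (b' i) (F x i) with hm'
  have hMdef : clampTo a' b' (F x) i = max (a' i) m' := rfl
  have hMc : max (a' i) m' = a' i ∨ max (a' i) m' = m' := max_choice _ _
  have hm'c : m' = b' i ∨ m' = F x i := min_choice _ _
  have hm'1 : m' ≤ b' i := min_le_left _ _
  have hm'2 : m' ≤ F x i := min_le_right _ _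
  have hM1 : a' i ≤ max (a' i) m' := le_max_left _ _
  have hM2 : m' ≤ max (a' i) m' := le_max_right _ _
  beta_reduce at hne hy
  rw [hMdef] at hne hy
  rcases lt_trichotomy (max (a' i) m') (x i) with hlt | heq | hgt
  · have hFlt : F x i < x i := by omega
    have hs1 : (max (a' i) m' - x i).sign = -1 := Int.sign_eq_neg_one_iff_neg.mpr (by omega)
    have hs2 : (F x i - x i).sign = -1 := Int.sign_eq_neg_one_iff_neg.mpr (by omega)
    rw [hs1] at hy
    refine ⟨⟨i, by omega, by rw [hs2]; exact hy⟩, ?_⟩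
    intro j
    rcases eq_or_ne j i with rfl | hj
    · rw [hy, Function.update_self]
      constructor <;> omega
    · rw [hy, Function.update_of_ne hj]
      exact hx j
  · exact absurd heq hne
  · have hFgt : x i < F x i := by omega
    have hs1 : (max (a' i) m' - x i).sign = 1 := Int.sign_eq_one_iff_pos.mpr (by omega)
    have hs2 : (F x i - x i).sign = 1 := Int.sign_eq_one_iff_pos.mpr (by omega)
    rw [hs1] at hy
    refine ⟨⟨i, by omega, by rw [hs2]; exact hy⟩, ?_⟩
    intro j
    rcases eq_or_ne j i with rfl | hj
    · rw [hy, Function.update_self]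
      constructor <;> omega
    · rw [hy, Function.update_of_ne hj]
      exact hx j

/-- intersection of an `F`-trap with a sub-box is a trap of the clamped system -/
lemma trap_inter_clamp {a b a' b' : Fin n → ℤ}
    (_haa' : ∀ i, a i ≤ a' i) (_hb'b : ∀ i, b' i ≤ b i)
    {F : (Fin n → ℤ) → Fin n → ℤ} {A : Set (Fin n → ℤ)}
    (hA : IsTrapDomain a b F A) (hne : (A ∩ StateSpace a' b').Nonempty) :
    IsTrapDomain a' b' (fun z => clampTo a' b' (F z)) (A ∩ StateSpace a' b') := by
  refine ⟨hne, Set.inter_subset_right, ?_⟩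
  rintro x ⟨hxA, hxS⟩ y hy
  obtain ⟨hAs, hyS⟩ := async_of_clamp_async hxS hy
  exact ⟨hA.2.2 x hxA y hAs, hyS⟩

end Stmt4

namespace Stmt4

variable {n : ℕ}

lemma count_split {a b : Fin n → ℤ} {F : (Fin n → ℤ) → Fin n → ℤ} (i0 : Fin n) (m : ℤ)
    (ham : a i0 ≤ m) (hmb : m + 1 ≤ b i0) :
    {A | IsAttractor a b F A}.ncard ≤
      {A | IsAttractor a (Function.update b i0 m)
        (fun z => clampTo a (Function.update b i0 m) (F z)) A}.ncard +
      {A | IsAttractor (Function.update a i0 (m + 1)) b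
        (fun z => clampTo (Function.update a i0 (m + 1)) b (F z)) A}.ncard := by
  classical
  set b1 := Function.update b i0 m with hb1
  set a2 := Function.update a i0 (m + 1) with ha2
  have hb1b : ∀ i, b1 i ≤ b i := by
    intro i
    rcases eq_or_ne i i0 with rfl | h
    · rw [hb1, Function.update_self]; omega
    · rw [hb1, Function.update_of_ne h]
  have haa2 : ∀ i, a i ≤ a2 i := by
    intro i
    rcases eq_or_ne i i0 with rfl | h
    · rw [ha2, Function.update_self]; omega
    · rw [ha2, Function.update_of_ne h]
  set SA := {A | IsAttractor a b F A} with hSA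
  set SA1 := {A | IsAttractor a b1 (fun z => clampTo a b1 (F z)) A} with hSA1
  set SA2 := {A | IsAttractor a2 b (fun z => clampTo a2 b (F z)) A} with hSA2
  have hchoice : ∀ A, ∃ B, A ∈ SA → (B ∈ SA1 ∨ B ∈ SA2) ∧ B ⊆ A ∧ B.Nonempty := by
    intro A
    by_cases hA : A ∈ SA
    swap
    · exact ⟨∅, fun h => absurd h hA⟩
    have hAT : IsTrapDomain a b F A := hA.1
    obtain ⟨x, hx⟩ := hAT.1
    have hxS := hAT.2.1 hx
    by_cases hx1 : x i0 ≤ m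
    · have hxS1 : x ∈ StateSpace a b1 := by
        intro j
        rcases eq_or_ne j i0 with rfl | h
        · rw [hb1, Function.update_self]; exact ⟨(hxS j).1, hx1⟩
        · rw [hb1, Function.update_of_ne h]; exact hxS j
      have hT1 := trap_inter_clamp (fun i => le_refl (a i)) hb1b hAT ⟨x, hx, hxS1⟩
      obtain ⟨B, hBsub, hBattr⟩ := trap_contains_attractor hT1
      exact ⟨B, fun _ => ⟨Or.inl hBattr, hBsub.trans Set.inter_subset_left, hBattr.1.1⟩⟩
    · have hxS2 : x ∈ StateSpace a2 b := by
        intro j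
        rcases eq_or_ne j i0 with rfl | h
        · rw [ha2, Function.update_self]; exact ⟨by omega, (hxS j).2⟩
        · rw [ha2, Function.update_of_ne h]; exact hxS j
      have hT2 := trap_inter_clamp haa2 (fun i => le_refl (b i)) hAT ⟨x, hx, hxS2⟩
      obtain ⟨B, hBsub, hBattr⟩ := trap_contains_attractor hT2
      exact ⟨B, fun _ => ⟨Or.inr hBattr, hBsub.trans Set.inter_subset_left, hBattr.1.1⟩⟩
  choose f hf using hchoice
  have hinj : Set.InjOn f SA := by
    intro A hA A' hA' heq
    have h1 := hf A hA
    have h2 := hf A' hA'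
    refine attractor_eq_of_inter hA hA' ?_
    obtain ⟨z, hz⟩ := h1.2.2
    exact ⟨z, h1.2.1 hz, h2.2.1 (heq ▸ hz)⟩
  have himg : f '' SA ⊆ SA1 ∪ SA2 := by
    rintro B ⟨A, hA, rfl⟩
    exact (hf A hA).1
  calc SA.ncard = (f '' SA).ncard := (Set.ncard_image_of_injOn hinj).symm
    _ ≤ (SA1 ∪ SA2).ncard := Set.ncard_le_ncard himg
        ((attractors_finite _ _ _).union (attractors_finite _ _ _))
    _ ≤ SA1.ncard + SA2.ncard := Set.ncard_union_le _ _

end Stmt4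

namespace Stmt4

variable {n : ℕ}

/-- L1 distance -/
def dist (x y : Fin n → ℤ) : ℕ := ∑ i, (x i - y i).natAbs

lemma dist_comm (x y : Fin n → ℤ) : dist x y = dist y x := by
  unfold dist
  exact Finset.sum_congr rfl fun j _ => by omega

lemma dist_pos {x y : Fin n → ℤ} (h : x ≠ y) : 0 < dist x y := by
  obtain ⟨i, hi⟩ := Function.ne_iff.mp h
  have h1 : 0 < (x i - y i).natAbs := by omega
  exact lt_of_lt_of_le h1 (Finset.single_le_sum (f := fun j => (x j - y j).natAbs)
    (fun j _ => Nat.zero_le _) (Finset.mem_univ i))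

lemma dist_update_lt {x y : Fin n → ℤ} {i : Fin n} {s : ℤ}
    (h : (x i + s - y i).natAbs < (x i - y i).natAbs) :
    dist (Function.update x i (x i + s)) y < dist x y := by
  unfold dist
  rw [← Finset.sum_erase_add Finset.univ _ (Finset.mem_univ i),
      ← Finset.sum_erase_add Finset.univ (fun j => (x j - y j).natAbs) (Finset.mem_univ i)]
  have e1 : ∑ j ∈ Finset.univ.erase i, (Function.update x i (x i + s) j - y j).natAbs
      = ∑ j ∈ Finset.univ.erase i, (x j - y j).natAbs :=
    Finset.sum_congr rfl fun j hj => by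
      rw [Function.update_of_ne (Finset.ne_of_mem_erase hj)]
  rw [e1, Function.update_self]
  exact Nat.add_lt_add_left h _

lemma step_le {a b : Fin n → ℤ} {F : (Fin n → ℤ) → Fin n → ℤ} {A : Set (Fin n → ℤ)}
    (hA : IsTrapDomain a b F A) {x y : Fin n → ℤ} (hx : x ∈ A)
    (hmin : ∀ x' ∈ A, dist x y ≤ dist x' y) {i : Fin n} (hxy : x i < y i) :
    F x i ≤ x i := by
  by_contra hlt
  push_neg at hlt
  have hsign : (F x i - x i).sign = 1 := Int.sign_eq_one_iff_pos.mpr (by omega)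
  have hstep : Async F x (Function.update x i (x i + 1)) :=
    ⟨i, by omega, by rw [hsign]⟩
  have hmem := hA.2.2 x hx _ hstep
  have hd := dist_update_lt (x := x) (y := y) (i := i) (s := 1) (by omega)
  have := hmin _ hmem
  omega

lemma step_ge {a b : Fin n → ℤ} {F : (Fin n → ℤ) → Fin n → ℤ} {A : Set (Fin n → ℤ)}
    (hA : IsTrapDomain a b F A) {x y : Fin n → ℤ} (hx : x ∈ A)
    (hmin : ∀ x' ∈ A, dist x y ≤ dist x' y) {i : Fin n} (hxy : y i < x i) :
    x i ≤ F x i := by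
  by_contra hlt
  push_neg at hlt
  have hsign : (F x i - x i).sign = -1 := Int.sign_eq_neg_one_iff_neg.mpr (by omega)
  have hstep : Async F x (Function.update x i (x i + (-1))) :=
    ⟨i, by omega, by rw [hsign]⟩
  have hmem := hA.2.2 x hx _ hstep
  have hd := dist_update_lt (x := x) (y := y) (i := i) (s := -1) (by omega)
  have := hmin _ hmem
  omega

end Stmt4

namespace Stmt4

variable {n : ℕ}

lemma core_contra {a b : Fin n → ℤ} {F : (Fin n → ℤ) → Fin n → ℤ} {x y : Fin n → ℤ}
    (hF : ∀ z ∈ StateSpace a b, F z ∈ StateSpace a b)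
    (hxS : x ∈ StateSpace a b) (hyS : y ∈ StateSpace a b) (hxy : x ≠ y)
    (hfx : F x = x) (hfy : F y = y)
    (hcorner : ∀ j, min (x j) (y j) = a j ∧ max (x j) (y j) = b j)
    (hnoPos : ∀ z v c, ¬ IsPosCircuit (EG a b F z v) c)
    (subcontra : ∀ w w', w ∈ StateSpace a b → w' ∈ StateSpace a b → w ≠ w' →
      clampTo (fun j => min (w j) (w' j)) (fun j => max (w j) (w' j)) (F w) = w →
      clampTo (fun j => min (w j) (w' j)) (fun j => max (w j) (w' j)) (F w') = w' →
      boxM (fun j => min (w j) (w' j)) (fun j => max (w j) (w' j)) < boxM a b → False) :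
    False := by
  classical
  set D : Finset (Fin n) := Finset.univ.filter (fun k => x k ≠ y k) with hD
  have hDmem : ∀ k, k ∈ D ↔ x k ≠ y k := by
    intro k; rw [hD, Finset.mem_filter]; simp
  obtain ⟨k₁, hk₁⟩ := Function.ne_iff.mp hxy
  have hk₁D : k₁ ∈ D := (hDmem k₁).mpr hk₁
  set u : Fin n → ℤ := fun k => if x k < y k then 1 else -1 with hu'
  have huc : ∀ k, (u k = 1 ∧ x k < y k) ∨ (u k = -1 ∧ ¬ x k < y k) := by
    intro k
    rw [hu']
    dsimp only
    split
    · exact Or.inl ⟨rfl, by assumption⟩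
    · exact Or.inr ⟨rfl, by assumption⟩
  have hu : ∀ k, u k = 1 ∨ u k = -1 := by
    intro k; rcases huc k with ⟨h, _⟩ | ⟨h, _⟩ <;> [exact Or.inl h; exact Or.inr h]
  have htriv : ∀ j, j ∉ D → (x j = y j ∧ a j = b j) := by
    intro j hj
    have h1 : x j = y j := by
      by_contra hc; exact hj ((hDmem j).mpr hc)
    have h2 := (hcorner j).1
    have h3 := (hcorner j).2
    omega
  set z : Fin n → (Fin n → ℤ) := fun k => Function.update y k (y k - u k) with hz'
  have hzk : ∀ k, z k k = y k - u k := fun k => Function.update_self ..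
  have hzj : ∀ k j, j ≠ k → z k j = y j := fun k j hjk => Function.update_of_ne hjk ..
  have hzS : ∀ k ∈ D, z k ∈ StateSpace a b := by
    intro k hk j
    have hk' := (hDmem k).mp hk
    rcases eq_or_ne j k with rfl | hjk
    · rw [hzk]
      have h1 := (hcorner j).1
      have h2 := (hcorner j).2
      rcases huc j with ⟨e, hlt⟩ | ⟨e, hlt⟩ <;> rw [e] <;> omega
    · rw [hzj k j hjk]; exact hyS j
  by_cases hsink : ∃ k ∈ D, ∀ j ∈ D, ¬ (u j * (F (z k) j - y j) < 0)
  · obtain ⟨k, hkD, hks⟩ := hsink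
    have hkD' := (hDmem k).mp hkD
    have hzkS : z k ∈ StateSpace a b := hzS k hkD
    have hFzS := hF _ hzkS
    have hup : ∀ j ∈ D, 0 ≤ u j * (F (z k) j - y j) := fun j hj => not_lt.mp (hks j hj)
    have htrivF : ∀ j, j ∉ D → F (z k) j = y j := by
      intro j hj
      have h0 := htriv j hj
      have h1 := (hFzS j).1
      have h2 := (hFzS j).2
      have h3 := (hyS j).1
      have h4 := (hyS j).2
      omega
    by_cases hzx : z k = x
    · -- z k = x : adjacent corners, positive loop at (x, u)
      have hyk : y k - u k = x k := by
        have := congrFun hzx k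
        rwa [hzk] at this
      have hupdate : Function.update x k (x k + u k) = y := by
        funext j
        rcases eq_or_ne j k with rfl | hjk
        · rw [Function.update_self]; omega
        · rw [Function.update_of_ne hjk]
          have := congrFun hzx j
          rw [hzj k j hjk] at this
          exact this.symm
      have hAdmk : Adm a b x u k := by
        refine ⟨hxS, hu k, ?_, ?_⟩ <;>
        · have h1 := (hyS k).1
          have h2 := (hyS k).2
          omega
      have hedge : ((k, (1:ℤ), k) : SEdge n) ∈ EG a b F x u := by
        refine ⟨hAdmk, hAdmk, ?_, ?_⟩
        · left
          refine ⟨rfl, ?_⟩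
          dsimp only
          unfold jac
          rw [hupdate, hfy, hfx, zdiv _ _ (hu k)]
          rcases hu k with h | h <;> rw [h] at hyk ⊢ <;> omega
        · rw [hfx, hupdate, hfy]
          rcases hu k with h | h <;> rw [h]
          · left
            have hyk' : y k = x k + 1 := by omega
            rw [hyk']
            push_cast
            constructor <;> linarith
          · right
            have hyk' : y k = x k - 1 := by omega
            rw [hyk']
            push_cast
            constructor <;> linarith
      exact hnoPos x u _ (loop_posCircuit hedge)
    · -- z k ≠ x : two fixed points of the clamp to [x ∧ z k, x ∨ z k]
      refine subcontra x (z k) hxS hzkS (fun h => hzx h.symm) ?_ ?_ ?_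
      · rw [hfx]
        funext j
        show max (min (x j) (z k j)) (min (max (x j) (z k j)) (x j)) = x j
        omega
      · funext j
        show max (min (x j) (z k j)) (min (max (x j) (z k j)) (F (z k) j)) = z k j
        by_cases hj : j ∈ D
        · have hj' := (hDmem j).mp hj
          have hupj := hup j hj
          rcases eq_or_ne j k with rfl | hjk
          · rw [hzk] at *
            have h1 := (hcorner j).1
            have h2 := (hcorner j).2
            rcases huc j with ⟨e, hlt⟩ | ⟨e, hlt⟩ <;> rw [e] at hupj ⊢ <;> omega
          · rw [hzj k j hjk] at *
            have h1 := (hcorner j).1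
            have h2 := (hcorner j).2
            rcases huc j with ⟨e, hlt⟩ | ⟨e, hlt⟩ <;> rw [e] at hupj <;> omega
        · have h0 := htriv j hj
          have h1 := htrivF j hj
          have hjk : j ≠ k := fun h => hj (h ▸ hkD)
          rw [hzj k j hjk] at *
          omega
      · unfold boxM
        apply Finset.sum_lt_sum
        · intro j _
          dsimp only
          have h1 := (hxS j).1
          have h2 := (hxS j).2
          have h3 := (hzkS j).1
          have h4 := (hzkS j).2
          omega
        · refine ⟨k, Finset.mem_univ k, ?_⟩
          dsimp only
          rw [hzk]
          have h1 := (hcorner k).1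
          have h2 := (hcorner k).2
          rcases huc k with ⟨e, hlt⟩ | ⟨e, hlt⟩ <;> rw [e] <;> omega
  · -- no sink : build a positive cycle at (y, -u)
    push_neg at hsink
    set w : Fin n → ℤ := fun j => - u j with hw'
    have hwval : ∀ j, w j = - u j := fun j => rfl
    have hwpm : ∀ j, w j = 1 ∨ w j = -1 := by
      intro j
      rcases hu j with h | h <;> rw [hwval, h] <;> [right; left] <;> norm_num
    have hyupd : ∀ k, Function.update y k (y k + w k) = z k := by
      intro k
      rw [hz']
      have : y k + w k = y k - u k := by rw [hwval]; ring
      rw [this]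
    have hAdm : ∀ k ∈ D, Adm a b y w k := by
      intro k hk
      have hk' := (hDmem k).mp hk
      refine ⟨hyS, hwpm k, ?_, ?_⟩ <;>
      · rw [hwval]
        have h1 := (hcorner k).1
        have h2 := (hcorner k).2
        rcases huc k with ⟨e, hlt⟩ | ⟨e, hlt⟩ <;> rw [e] <;> omega
    have hsink' : ∀ k ∈ D, ∃ j, j ∈ D ∧ u j * (F (z k) j - y j) < 0 := by
      intro k hk
      obtain ⟨j, hj1, hj2⟩ := hsink k hk
      exact ⟨j, hj1, hj2⟩
    set f : Fin n → Fin n := fun k => if h : k ∈ D then (hsink' k h).choose else k with hf'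
    have hfD : ∀ k ∈ D, f k ∈ D := by
      intro k hk
      rw [hf']
      dsimp only
      rw [dif_pos hk]
      exact (hsink' k hk).choose_spec.1
    have hfR : ∀ k ∈ D, u (f k) * (F (z k) (f k) - y (f k)) < 0 := by
      intro k hk
      rw [hf']
      dsimp only
      rw [dif_pos hk]
      exact (hsink' k hk).choose_spec.2
    have hE : ∀ k ∈ D, ((k, u k * u (f k), f k) : SEdge n) ∈ EG a b F y w := by
      intro k hk
      have hjD := hfD k hk
      have hR := hfR k hk
      refine ⟨hAdm k hk, hAdm _ hjD, ?_, ?_⟩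
      · dsimp only
        have hjac : jac F y w (f k) k = (F (z k) (f k) - y (f k)) * w k := by
          unfold jac
          rw [hyupd k, hfy, zdiv _ _ (hwpm k)]
        rw [hwval] at hjac
        rcases hu k with hk1 | hk1 <;> rcases hu (f k) with hj1 | hj1 <;>
          rw [hk1] at hjac <;> rw [hj1] at hR <;> rw [hk1, hj1]
        · left; refine ⟨by norm_num, by omega⟩
        · right; refine ⟨by norm_num, by omega⟩
        · right; refine ⟨by norm_num, by omega⟩
        · left; refine ⟨by norm_num, by omega⟩
      · rw [hfy, hyupd k]
        rcases hu (f k) with hj1 | hj1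
        · right
          rw [hj1] at hR
          rw [hwval, hj1]
          have hle : F (z k) (f k) ≤ y (f k) - 1 := by omega
          have hle' : (F (z k) (f k) : ℚ) ≤ (y (f k) : ℚ) - 1 := by exact_mod_cast hle
          push_cast
          constructor <;> linarith
        · left
          rw [hj1] at hR
          rw [hwval, hj1]
          have hle : y (f k) + 1 ≤ F (z k) (f k) := by omega
          have hle' : (y (f k) : ℚ) + 1 ≤ (F (z k) (f k) : ℚ) := by exact_mod_cast hle
          push_cast
          constructor <;> linarith
    obtain ⟨c, hc⟩ := cycle_posCircuit D f hfD u hu hE k₁ hk₁D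
    exact hnoPos y w c hc

end Stmt4

namespace Stmt4

variable {n : ℕ}

lemma uniq_attractor {a b : Fin n → ℤ} {F : (Fin n → ℤ) → Fin n → ℤ}
    (hab : ∀ i, a i ≤ b i)
    (hF : ∀ x ∈ StateSpace a b, F x ∈ StateSpace a b)
    (hnoPos : ∀ x v c, ¬ IsPosCircuit (EG a b F x v) c)
    (IH : ∀ a' b' (F' : (Fin n → ℤ) → Fin n → ℤ), boxM a' b' < boxM a b →
        (∀ i, a' i ≤ b' i) →
        (∀ x ∈ StateSpace a' b', F' x ∈ StateSpace a' b') →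
        (∀ x v c, ¬ IsPosCircuit (EG a' b' F' x v) c) →
        {A | IsAttractor a' b' F' A}.ncard ≤ 1) :
    {A | IsAttractor a b F A}.ncard ≤ 1 := by
  classical
  by_contra hgt
  push_neg at hgt
  obtain ⟨A, hA, B, hB, hAB⟩ := (Set.one_lt_ncard (attractors_finite a b F)).mp hgt
  have hA' : IsAttractor a b F A := hA
  have hB' : IsAttractor a b F B := hB
  have hdisj : ∀ z, z ∈ A → z ∈ B → False := fun z h1 h2 =>
    hAB (attractor_eq_of_inter hA' hB' ⟨z, h1, h2⟩)
  have subcontra : ∀ w w', w ∈ StateSpace a b → w' ∈ StateSpace a b → w ≠ w' →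
      clampTo (fun j => min (w j) (w' j)) (fun j => max (w j) (w' j)) (F w) = w →
      clampTo (fun j => min (w j) (w' j)) (fun j => max (w j) (w' j)) (F w') = w' →
      boxM (fun j => min (w j) (w' j)) (fun j => max (w j) (w' j)) < boxM a b → False := by
    intro w w' hwS hw'S hne hfw hfw' hlt
    set p' : Fin n → ℤ := fun j => min (w j) (w' j) with hp'
    set q' : Fin n → ℤ := fun j => max (w j) (w' j) with hq'
    have hp'q' : ∀ i, p' i ≤ q' i := fun i => min_le_max
    have hap' : ∀ i, a i ≤ p' i := fun i => le_min (hwS i).1 (hw'S i).1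
    have hq'b : ∀ i, q' i ≤ b i := fun i => max_le (hwS i).2 (hw'S i).2
    have hmaps : ∀ zz ∈ StateSpace p' q', clampTo p' q' (F zz) ∈ StateSpace p' q' :=
      fun zz _ => clampTo_mem hp'q' _
    have hnoPos' : ∀ xx v c, ¬ IsPosCircuit (EG p' q' (fun zz => clampTo p' q' (F zz)) xx v) c :=
      fun xx v c hc => hnoPos xx v c (posCircuit_mono (EG_clamp_subset hap' hq'b F xx v) hc)
    have hcard := IH p' q' (fun zz => clampTo p' q' (F zz)) hlt hp'q' hmaps hnoPos'
    have hwS' : w ∈ StateSpace p' q' := fun i => ⟨min_le_left _ _, le_max_left _ _⟩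
    have hw'S' : w' ∈ StateSpace p' q' := fun i => ⟨min_le_right _ _, le_max_right _ _⟩
    exact two_attractors_contra hwS' hw'S' hfw hfw' hne hcard
  obtain ⟨xa, hxa⟩ := hA'.1.1
  obtain ⟨yb, hyb⟩ := hB'.1.1
  set Dset : Set ℕ := (fun p : (Fin n → ℤ) × (Fin n → ℤ) => dist p.1 p.2) '' (A ×ˢ B)
    with hDset
  have hDne : Dset.Nonempty := ⟨_, ⟨(xa, yb), ⟨hxa, hyb⟩, rfl⟩⟩
  obtain ⟨⟨x, y⟩, hmemAB, hdxy⟩ := Nat.sInf_mem hDne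
  have hxA : x ∈ A := hmemAB.1
  have hyB : y ∈ B := hmemAB.2
  have hminA : ∀ x' ∈ A, dist x y ≤ dist x' y := by
    intro x' hx'
    have h1 : dist x' y ∈ Dset := ⟨(x', y), ⟨hx', hyB⟩, rfl⟩
    have := Nat.sInf_le h1
    have h2 : dist x y = sInf Dset := hdxy
    omega
  have hminB : ∀ y' ∈ B, dist x y ≤ dist x y' := by
    intro y' hy'
    have h1 : dist x y' ∈ Dset := ⟨(x, y'), ⟨hxA, hy'⟩, rfl⟩
    have := Nat.sInf_le h1
    have h2 : dist x y = sInf Dset := hdxy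
    omega
  have hxS := hA'.1.2.1 hxA
  have hyS := hB'.1.2.1 hyB
  have hxyne : x ≠ y := fun h => hdisj x hxA (h ▸ hyB)
  have h1 : ∀ i, x i < y i → F x i ≤ x i := fun i hi => step_le hA'.1 hxA hminA hi
  have h2 : ∀ i, y i < x i → x i ≤ F x i := fun i hi => step_ge hA'.1 hxA hminA hi
  have hminB' : ∀ y' ∈ B, dist y x ≤ dist y' x := by
    intro y' hy'
    rw [dist_comm y x, dist_comm y' x]
    exact hminB y' hy'
  have h3 : ∀ i, y i < x i → F y i ≤ y i := fun i hi => step_le hB'.1 hyB hminB' hi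
  have h4 : ∀ i, x i < y i → y i ≤ F y i := fun i hi => step_ge hB'.1 hyB hminB' hi
  have hfixx : clampTo (fun j => min (x j) (y j)) (fun j => max (x j) (y j)) (F x) = x := by
    funext j
    show max (min (x j) (y j)) (min (max (x j) (y j)) (F x j)) = x j
    rcases lt_trichotomy (x j) (y j) with h | h | h
    · have := h1 j h; omega
    · omega
    · have := h2 j h; omega
  have hfixy : clampTo (fun j => min (x j) (y j)) (fun j => max (x j) (y j)) (F y) = y := by
    funext j
    show max (min (x j) (y j)) (min (max (x j) (y j)) (F y j)) = y j
    rcases lt_trichotomy (x j) (y j) with h | h | h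
    · have := h4 j h; omega
    · omega
    · have := h3 j h; omega
  have hboxle : ∀ j, (max (x j) (y j) - min (x j) (y j)).toNat ≤ (b j - a j).toNat := by
    intro j
    have e1 := hxS j
    have e2 := hyS j
    omega
  have hble : boxM (fun j => min (x j) (y j)) (fun j => max (x j) (y j)) ≤ boxM a b :=
    Finset.sum_le_sum (fun j _ => hboxle j)
  rcases lt_or_eq_of_le hble with hlt | heq
  · exact subcontra x y hxS hyS hxyne hfixx hfixy hlt
  · have hcoord : ∀ j, (max (x j) (y j) - min (x j) (y j)).toNat = (b j - a j).toNat := by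
      intro j
      by_contra hc
      have hlt' := lt_of_le_of_ne (hboxle j) hc
      have := Finset.sum_lt_sum (fun i (_ : i ∈ Finset.univ) => hboxle i)
        ⟨j, Finset.mem_univ j, hlt'⟩
      have heq' : (∑ i, (max (x i) (y i) - min (x i) (y i)).toNat)
          = ∑ i, (b i - a i).toNat := heq
      omega
    have hcorner : ∀ j, min (x j) (y j) = a j ∧ max (x j) (y j) = b j := by
      intro j
      have e0 := hcoord j
      have e1 := hxS j
      have e2 := hyS j
      have e3 := hab j
      omega
    have hpa : (fun j => min (x j) (y j)) = a := funext fun j => (hcorner j).1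
    have hqb : (fun j => max (x j) (y j)) = b := funext fun j => (hcorner j).2
    rw [hpa, hqb] at hfixx hfixy
    rw [clampTo_id (hF x hxS)] at hfixx
    rw [clampTo_id (hF y hyS)] at hfixy
    exact core_contra hF hxS hyS hxyne hfixx hfixy hcorner hnoPos subcontra

end Stmt4

namespace Stmt4

variable {n : ℕ}

theorem GS : ∀ (M : ℕ) (a b : Fin n → ℤ) (F : (Fin n → ℤ) → Fin n → ℤ)
    (I : Finset (Fin n)), boxM a b = M →
    (∀ i, a i ≤ b i) →
    (∀ x ∈ StateSpace a b, F x ∈ StateSpace a b) →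
    (∀ x v c, IsPosCircuit (EG a b F x v) c → ∃ i ∈ I, i ∈ c.map (fun e => e.1)) →
    {A | IsAttractor a b F A}.ncard ≤ ∏ i ∈ I, ((genT a b F i).ncard + 1) := by
  intro M
  induction M using Nat.strong_induction_on with
  | _ M IH =>
  intro a b F I hM hab hF hPFVS
  by_cases hcase : ∃ i0 ∈ I, (genT a b F i0).Nonempty
  · obtain ⟨i0, hi0I, θ, hθ⟩ := hcase
    obtain ⟨x0, v0, hθval, hmp0⟩ := hθ
    have hadm0 := memPosCircuit_adm hmp0
    set m : ℤ := min (x0 i0) (x0 i0 + v0 i0) with hm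
    have ham : a i0 ≤ m := le_min (hadm0.1 i0).1 hadm0.2.2.1
    have hmb : m + 1 ≤ b i0 := by
      have h1 := (hadm0.1 i0).2
      have h2 := hadm0.2.2.2
      rcases hadm0.2.1 with h | h <;> omega
    have hθm : θ = (m : ℝ) + 1 / 2 := by
      rcases hadm0.2.1 with h | h
      · have e : m = x0 i0 := by rw [hm, h]; omega
        rw [e, hθval, h]; push_cast; ring
      · have e : m = x0 i0 - 1 := by rw [hm, h]; omega
        rw [e, hθval, h]; push_cast; ring
    set b1 := Function.update b i0 m with hb1
    set a2 := Function.update a i0 (m + 1) with ha2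
    have hb1i0 : b1 i0 = m := Function.update_self ..
    have ha2i0 : a2 i0 = m + 1 := Function.update_self ..
    have hb1b : ∀ i, b1 i ≤ b i := by
      intro i
      rcases eq_or_ne i i0 with rfl | h
      · rw [hb1i0]; omega
      · rw [hb1, Function.update_of_ne h]
    have haa2 : ∀ i, a i ≤ a2 i := by
      intro i
      rcases eq_or_ne i i0 with rfl | h
      · rw [ha2i0]; omega
      · rw [ha2, Function.update_of_ne h]
    have hab1 : ∀ i, a i ≤ b1 i := by
      intro i
      rcases eq_or_ne i i0 with rfl | h
      · rw [hb1i0]; exact ham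
      · rw [hb1, Function.update_of_ne h]; exact hab i
    have ha2b : ∀ i, a2 i ≤ b i := by
      intro i
      rcases eq_or_ne i i0 with rfl | h
      · rw [ha2i0]; exact hmb
      · rw [ha2, Function.update_of_ne h]; exact hab i
    set F1 := fun zz => clampTo a b1 (F zz) with hF1
    set F2 := fun zz => clampTo a2 b (F zz) with hF2
    have hsplit : {A | IsAttractor a b F A}.ncard ≤
        {A | IsAttractor a b1 F1 A}.ncard + {A | IsAttractor a2 b F2 A}.ncard :=
      count_split (F := F) i0 m ham hmb
    have hM1 : boxM a b1 < M := by
      rw [← hM]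
      unfold boxM
      apply Finset.sum_lt_sum
      · intro j _
        have := hb1b j
        omega
      · refine ⟨i0, Finset.mem_univ i0, ?_⟩
        rw [hb1i0]
        omega
    have hM2 : boxM a2 b < M := by
      rw [← hM]
      unfold boxM
      apply Finset.sum_lt_sum
      · intro j _
        have := haa2 j
        omega
      · refine ⟨i0, Finset.mem_univ i0, ?_⟩
        rw [ha2i0]
        omega
    have hPFVS1 : ∀ x v c, IsPosCircuit (EG a b1 F1 x v) c → ∃ i ∈ I, i ∈ c.map (fun e => e.1) :=
      fun x v c hc => hPFVS x v c
        (posCircuit_mono (EG_clamp_subset (fun i => le_refl (a i)) hb1b F x v) hc)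
    have hPFVS2 : ∀ x v c, IsPosCircuit (EG a2 b F2 x v) c → ∃ i ∈ I, i ∈ c.map (fun e => e.1) :=
      fun x v c hc => hPFVS x v c
        (posCircuit_mono (EG_clamp_subset haa2 (fun i => le_refl (b i)) F x v) hc)
    have hcard1 := IH (boxM a b1) hM1 a b1 F1 I rfl hab1
      (fun zz _ => clampTo_mem hab1 _) hPFVS1
    have hcard2 := IH (boxM a2 b) hM2 a2 b F2 I rfl ha2b
      (fun zz _ => clampTo_mem ha2b _) hPFVS2
    have hGfin : ∀ i, (genT a b F i).Finite := genT_finite a b F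
    have hsub1 : ∀ i, genT a b1 F1 i ⊆ genT a b F i :=
      fun i => genT_clamp_subset (fun _ => le_refl _) hb1b F i
    have hsub2 : ∀ i, genT a2 b F2 i ⊆ genT a b F i :=
      fun i => genT_clamp_subset haa2 (fun _ => le_refl _) F i
    have hsub1' : genT a b1 F1 i0 ⊆ genT a b F i0 ∩ Set.Iio θ := by
      intro t ht
      refine ⟨hsub1 i0 ht, ?_⟩
      obtain ⟨x, v, htval, hmp⟩ := ht
      have hadm := memPosCircuit_adm hmp
      have e1 : x i0 ≤ m := by
        have := (hadm.1 i0).2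
        rwa [hb1i0] at this
      have e2 : x i0 + v i0 ≤ m := by
        have := hadm.2.2.2
        rwa [hb1i0] at this
      rw [Set.mem_Iio, htval, hθm]
      rcases hadm.2.1 with h | h <;> rw [h] <;> push_cast
      · have e3 : (x i0 : ℝ) ≤ (m : ℝ) - 1 := by exact_mod_cast (by omega : x i0 ≤ m - 1)
        linarith
      · have e3 : (x i0 : ℝ) ≤ (m : ℝ) := by exact_mod_cast e1
        linarith
    have hsub2' : genT a2 b F2 i0 ⊆ genT a b F i0 ∩ Set.Ioi θ := by
      intro t ht
      refine ⟨hsub2 i0 ht, ?_⟩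
      obtain ⟨x, v, htval, hmp⟩ := ht
      have hadm := memPosCircuit_adm hmp
      have e1 : m + 1 ≤ x i0 := by
        have := (hadm.1 i0).1
        rwa [ha2i0] at this
      have e2 : m + 1 ≤ x i0 + v i0 := by
        have := hadm.2.2.1
        rwa [ha2i0] at this
      rw [Set.mem_Ioi, htval, hθm]
      rcases hadm.2.1 with h | h <;> rw [h] <;> push_cast
      · have e3 : (m : ℝ) + 1 ≤ (x i0 : ℝ) := by exact_mod_cast e1
        linarith
      · have e3 : (m : ℝ) + 2 ≤ (x i0 : ℝ) := by exact_mod_cast (by omega : m + 2 ≤ x i0)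
        linarith
    have hθG : θ ∈ genT a b F i0 := ⟨x0, v0, hθval, hmp0⟩
    set S1 := genT a b F i0 ∩ Set.Iio θ with hS1
    set S2 := genT a b F i0 ∩ Set.Ioi θ with hS2
    have hS1fin : S1.Finite := (hGfin i0).subset Set.inter_subset_left
    have hS2fin : S2.Finite := (hGfin i0).subset Set.inter_subset_left
    have key : S1.ncard + S2.ncard + 1 ≤ (genT a b F i0).ncard := by
      have hd2 : Disjoint S2 ({θ} : Set ℝ) := by
        rw [Set.disjoint_left]
        rintro t ⟨_, ht⟩ rfl
        exact absurd ht (by simp)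
      have hd1 : Disjoint S1 (S2 ∪ {θ}) := by
        rw [Set.disjoint_left]
        rintro t ⟨_, ht⟩ hmem
        rw [Set.mem_Iio] at ht
        rcases hmem with ⟨_, h2⟩ | h2
        · rw [Set.mem_Ioi] at h2; linarith
        · rw [Set.mem_singleton_iff] at h2; subst h2; linarith
      have hsubu : S1 ∪ (S2 ∪ {θ}) ⊆ genT a b F i0 := by
        rintro t (⟨h, _⟩ | ⟨h, _⟩ | h)
        · exact h
        · exact h
        · rw [Set.mem_singleton_iff] at h; exact h ▸ hθG
      have := Set.ncard_le_ncard hsubu (hGfin i0)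
      rw [Set.ncard_union_eq hd1 hS1fin (hS2fin.union (Set.finite_singleton θ)),
        Set.ncard_union_eq hd2 hS2fin (Set.finite_singleton θ), Set.ncard_singleton] at this
      omega
    have hprodrest : ∀ (T : Fin n → Set ℝ), (∀ i, T i ⊆ genT a b F i) →
        ∏ i ∈ I.erase i0, ((T i).ncard + 1) ≤ ∏ i ∈ I.erase i0, ((genT a b F i).ncard + 1) :=
      fun T hT => Finset.prod_le_prod' fun i _ =>
        Nat.add_le_add_right (Set.ncard_le_ncard (hT i) (hGfin i)) 1
    have hprod1 : ∏ i ∈ I, ((genT a b1 F1 i).ncard + 1) ≤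
        (S1.ncard + 1) * ∏ i ∈ I.erase i0, ((genT a b F i).ncard + 1) := by
      rw [← Finset.mul_prod_erase I _ hi0I]
      exact Nat.mul_le_mul
        (Nat.add_le_add_right (Set.ncard_le_ncard hsub1' hS1fin) 1)
        (hprodrest _ hsub1)
    have hprod2 : ∏ i ∈ I, ((genT a2 b F2 i).ncard + 1) ≤
        (S2.ncard + 1) * ∏ i ∈ I.erase i0, ((genT a b F i).ncard + 1) := by
      rw [← Finset.mul_prod_erase I _ hi0I]
      exact Nat.mul_le_mul
        (Nat.add_le_add_right (Set.ncard_le_ncard hsub2' hS2fin) 1)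
        (hprodrest _ hsub2)
    have hfinal : ∏ i ∈ I, ((genT a b F i).ncard + 1) =
        ((genT a b F i0).ncard + 1) * ∏ i ∈ I.erase i0, ((genT a b F i).ncard + 1) :=
      (Finset.mul_prod_erase I _ hi0I).symm
    have hmul : (S1.ncard + 1) * ∏ i ∈ I.erase i0, ((genT a b F i).ncard + 1)
        + (S2.ncard + 1) * ∏ i ∈ I.erase i0, ((genT a b F i).ncard + 1)
        ≤ ((genT a b F i0).ncard + 1) * ∏ i ∈ I.erase i0, ((genT a b F i).ncard + 1) := by
      rw [← Nat.add_mul]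
      exact Nat.mul_le_mul_right _ (by omega)
    omega
  · push_neg at hcase
    have hnoPos : ∀ x v c, ¬ IsPosCircuit (EG a b F x v) c := by
      intro x v c hc
      obtain ⟨i, hiI, hic⟩ := hPFVS x v c hc
      exact (Set.not_nonempty_iff_eq_empty.mpr (hcase i hiI)).elim
        ⟨(x i : ℝ) + (v i : ℝ) / 2, x, v, rfl, c, hc, hic⟩
    have h1 : {A | IsAttractor a b F A}.ncard ≤ 1 := by
      refine uniq_attractor hab hF hnoPos ?_
      intro a' b' F' hlt hab' hF' hnoPos'
      have := IH (boxM a' b') (hM ▸ hlt) a' b' F' ∅ rfl hab' hF'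
        (fun x v c hc => absurd hc (hnoPos' x v c))
      simpa using this
    have h2 : 1 ≤ ∏ i ∈ I, ((genT a b F i).ncard + 1) :=
      Nat.one_le_iff_ne_zero.mpr (Finset.prod_ne_zero_iff.mpr fun i _ => Nat.succ_ne_zero _)
    omega

end Stmt4

namespace Stmt4

variable {n : ℕ}

lemma EG_to_localGraphT {a b : Fin n → ℤ} (hab : ∀ i, a i + 1 ≤ b i)
    (F : (Fin n → ℤ) → Fin n → ℤ) (x v : Fin n → ℤ) (xS : x ∈ StateSpace a b) :
    ∃ v', InX' a b x v' ∧ (∀ k, Adm a b x v k → v' k = v k) ∧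
      EG a b F x v ⊆ localGraphT F x v' := by
  classical
  set v' : Fin n → ℤ := fun j =>
    if (v j = 1 ∨ v j = -1) ∧ a j ≤ x j + v j ∧ x j + v j ≤ b j then v j
    else if x j + 1 ≤ b j then 1 else -1 with hv'
  have hveq : ∀ k, Adm a b x v k → v' k = v k := by
    intro k hk
    rw [hv']
    dsimp only
    rw [if_pos ⟨hk.2.1, hk.2.2.1, hk.2.2.2⟩]
  have hdir : IsDir v' := by
    intro j
    rw [hv']
    dsimp only
    split_ifs with h1 h2
    · exact h1.1
    · exact Or.inl rfl
    · exact Or.inr rfl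
  have hadd : (x + v') ∈ StateSpace a b := by
    intro j
    have hx := xS j
    have hj := hab j
    show a j ≤ x j + v' j ∧ x j + v' j ≤ b j
    rw [hv']
    dsimp only
    split_ifs with h1 h2
    · exact ⟨h1.2.1, h1.2.2⟩
    · omega
    · omega
  refine ⟨v', ⟨xS, hdir, hadd⟩, hveq, ?_⟩
  rintro ⟨j, s, i⟩ ⟨hAj, hAi, hsgn, hbs⟩
  have hvj := hveq j hAj
  have hvi := hveq i hAi
  have hjac : jac F x v' i j = jac F x v i j := by
    unfold jac
    rw [hvj]
  refine ⟨?_, ?_⟩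
  · rcases hsgn with ⟨hs, h⟩ | ⟨hs, h⟩
    · exact Or.inl ⟨hs, hjac ▸ h⟩
    · exact Or.inr ⟨hs, hjac ▸ h⟩
  · show BothSides _ _ _
    rw [hvj, hvi]
    exact hbs

lemma tset_finite (a b : Fin n → ℤ) (F : (Fin n → ℤ) → Fin n → ℤ) (i : Fin n) :
    (Tset a b F i).Finite := by
  have hsub : Tset a b F i ⊆
      (fun k : ℤ => (k : ℝ) / 2) '' Set.Icc (2 * a i - 1) (2 * b i + 1) := by
    rintro t ⟨x, v, hx', ht, _⟩
    refine ⟨2 * x i + v i, ?_, ?_⟩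
    · have h1 := (hx'.1 i).1
      have h2 := (hx'.1 i).2
      rcases hx'.2.1 i with h | h <;> rw [h] <;> constructor <;> omega
    · rw [ht]
      push_cast
      ring
  exact ((Set.finite_Icc _ _).image _).subset hsub

end Stmt4

theorem stmt4' {n : ℕ} (a b : Fin n → ℤ) (hab : ∀ i, a i + 1 ≤ b i)
    (F : (Fin n → ℤ) → Fin n → ℤ)
    (hF : ∀ x ∈ StateSpace a b, F x ∈ StateSpace a b)
    (I : Finset (Fin n))
    (hI : ∀ x v, InX' a b x v → IsPFVS (localGraphT F x v) I) :
    {A | IsAttractor a b F A}.ncard ≤ ∏ i ∈ I, ((Tset a b F i).ncard + 1) := by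
  have hab' : ∀ i, a i ≤ b i := fun i => by have := hab i; omega
  have hPFVSg : ∀ x v c, IsPosCircuit (Stmt4.EG a b F x v) c →
      ∃ i ∈ I, i ∈ c.map (fun e => e.1) := by
    intro x v c hc
    obtain ⟨e₀, he₀⟩ := List.exists_mem_of_ne_nil c hc.1.1
    have hxS : x ∈ StateSpace a b := (hc.1.2.1 e₀ he₀).1.1
    obtain ⟨v', hInX', _, hsub⟩ := Stmt4.EG_to_localGraphT hab F x v hxS
    exact hI x v' hInX' c (Stmt4.posCircuit_mono hsub hc)
  have hGS := Stmt4.GS (Stmt4.boxM a b) a b F I rfl hab' hF hPFVSg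
  have hTsub : ∀ i, Stmt4.genT a b F i ⊆ Tset a b F i := by
    rintro i t ⟨x, v, ht, hmp⟩
    have hadm := Stmt4.memPosCircuit_adm hmp
    obtain ⟨v', hInX', hveq, hsub⟩ := Stmt4.EG_to_localGraphT hab F x v hadm.1
    refine ⟨x, v', hInX', ?_, Stmt4.memPosCircuit_mono hsub hmp⟩
    rw [ht, hveq i hadm]
  have hprod : ∏ i ∈ I, ((Stmt4.genT a b F i).ncard + 1) ≤
      ∏ i ∈ I, ((Tset a b F i).ncard + 1) :=
    Finset.prod_le_prod' fun i _ =>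
      Nat.add_le_add_right (Set.ncard_le_ncard (hTsub i) (Stmt4.tset_finite a b F i)) 1
  omega

/-- Main result: if `I` is a positive feedback vertex set of every
`G_F(x,v)`, then the number of attractors of `Γ(F)` is at most
`∏_{i ∈ I} (|T_i(G_F)| + 1)`. -/
theorem stmt4 {n : ℕ} (a b : Fin n → ℤ) (hab : ∀ i, a i + 1 ≤ b i)
    (F : (Fin n → ℤ) → Fin n → ℤ)
    (hF : ∀ x ∈ StateSpace a b, F x ∈ StateSpace a b)
    (I : Finset (Fin n))
    (hI : ∀ x v, InX' a b x v → IsPFVS (localGraphT F x v) I) :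
    {A | IsAttractor a b F A}.ncard ≤ ∏ i ∈ I, ((Tset a b F i).ncard + 1) := by
  exact stmt4' a b hab F hF I hI
end
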